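/- arXiv:1402.5529 — 3 statements merged into one kernel-verified Lean document; each statement's English description precedes it below -/
import Mathlib

section
/- Monotonicity of the barriers in the initial datum: let j > 0, δ > 0 and let u, v ∈ L^∞(ℝ₊,ℝ₊) ∩ L¹(ℝ₊,ℝ₊) with jδ < F(0; u), jδ < F(0; v) and u ≤ v. Then for all k ∈ ℕ, S^{(δ,−)}_{kδ}(u) ≤ S^{(δ,−)}_{kδ}(v) and S^{(δ,+)}_{kδ}(u) ≤ S^{(δ,+)}_{kδ}(v). -/
open MeasureTheory Set Filter

noncomputable section

/-- An element of the space `𝓤`: an atom `u.1 ≥ 0` at the origin together with a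
density `u.2` on `ℝ₊`, representing the measure `u.1 δ₀ + u.2 dr`. -/
abbrev UEl := ℝ × (ℝ → ℝ)

/-- Membership in `𝓤`: nonnegative atom, nonnegative density which is in
`L¹(ℝ₊) ∩ L^∞(ℝ₊)`. -/
def memU (u : UEl) : Prop :=
  0 ≤ u.1 ∧ (∀ r, 0 ≤ u.2 r) ∧
    Integrable u.2 (volume.restrict (Set.Ioi (0:ℝ))) ∧
    ∃ M : ℝ, ∀ r, u.2 r ≤ M

/-- The tail function `F(r; u) = c_u 𝟙_{{0}}(r) + ∫_r^∞ ρ_u`. -/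
def tailF (u : UEl) (r : ℝ) : ℝ :=
  (if r = 0 then u.1 else 0) + ∫ x in Set.Ioi r, u.2 x

/-- Total variation distance `|u − v|₁ = |c_u − c_v| + ∫₀^∞ |ρ_u − ρ_v|`. -/
def dist1 (u v : UEl) : ℝ :=
  |u.1 - v.1| + ∫ r in Set.Ioi (0:ℝ), |u.2 r - v.2 r|

/-- Membership in `𝓤_δ`: in `𝓤` and the density has mass `> jδ`. -/
def memUdelta (j δ : ℝ) (u : UEl) : Prop :=
  memU u ∧ j * δ < ∫ r in Set.Ioi (0:ℝ), u.2 r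

/-- `R_δ(u) = inf {r ≥ 0 : F(r; u) = jδ}`. -/
def Rdelta (j δ : ℝ) (u : UEl) : ℝ :=
  sInf {r : ℝ | 0 ≤ r ∧ tailF u r = j * δ}

/-- The cut-and-paste operator `K^{(δ)} u = (jδ, ρ_u 𝟙_{[0, R_δ(u)]})`. -/
def cutPaste (j δ : ℝ) (u : UEl) : UEl :=
  (j * δ, Set.indicator (Set.Icc 0 (Rdelta j δ u)) u.2)

/-- The Neumann heat kernel on `ℝ₊`. -/
def Gneum (t r r' : ℝ) : ℝ :=
  (Real.sqrt (2 * Real.pi * t))⁻¹ *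
    (Real.exp (-(r - r')^2 / (2*t)) + Real.exp (-(r + r')^2 / (2*t)))

/-- The Neumann heat semigroup acting on `𝓤`: the result has zero atom and density
`r ↦ c_u G_t(r,0) + ∫₀^∞ G_t(r,r') ρ_u(r') dr'`. -/
def heat (t : ℝ) (u : UEl) : UEl :=
  (0, fun r => u.1 * Gneum t r 0 + ∫ r' in Set.Ioi (0:ℝ), Gneum t r r' * u.2 r')

/-- Mass-transport partial order: `u ≤ v` iff `F(r;u) ≤ F(r;v)` for all `r ≥ 0`. -/
def Ule (u v : UEl) : Prop := ∀ r : ℝ, 0 ≤ r → tailF u r ≤ tailF v r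

/-- Partial order modulo `m`: `F(r;u) ≤ F(r;v) + m` for all `r ≥ 0`. -/
def UleMod (u v : UEl) (m : ℝ) : Prop :=
  ∀ r : ℝ, 0 ≤ r → tailF u r ≤ tailF v r + m

/-- The lower barrier `S^{(δ,−)}_{kδ}(u)`. -/
def Sminus (j δ : ℝ) (u : UEl) : ℕ → UEl
  | 0 => u
  | k+1 => cutPaste j δ (heat δ (Sminus j δ u k))

/-- The upper barrier `S^{(δ,+)}_{kδ}(u)`. -/
def Splus (j δ : ℝ) (u : UEl) : ℕ → UEl
  | 0 => u
  | k+1 => heat δ (cutPaste j δ (Splus j δ u k))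

/-- A nonnegative density in `L¹(ℝ₊) ∩ L^∞(ℝ₊)`. -/
def goodFn (u : ℝ → ℝ) : Prop :=
  (∀ r, 0 ≤ u r) ∧ Integrable u (volume.restrict (Set.Ioi (0:ℝ))) ∧
    ∃ M : ℝ, ∀ r, u r ≤ M

/-- Mass-transport order on densities: `∫_r^∞ u ≤ ∫_r^∞ v` for all `r ≥ 0`. -/
def fnLe (u v : ℝ → ℝ) : Prop :=
  ∀ r : ℝ, 0 ≤ r → (∫ x in Set.Ioi r, u x) ≤ ∫ x in Set.Ioi r, v x

end


namespace BarAux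
open Topology


noncomputable def g (δ z : ℝ) : ℝ := (Real.sqrt (2 * Real.pi * δ))⁻¹ * Real.exp (-z^2 / (2*δ))

lemma g_nonneg (δ z : ℝ) : 0 ≤ g δ z :=
  mul_nonneg (inv_nonneg.2 (Real.sqrt_nonneg _)) (Real.exp_nonneg _)

lemma g_cont (δ : ℝ) : Continuous (g δ) := by
  unfold g; fun_prop

lemma g_eq (δ : ℝ) : g δ = fun z => (Real.sqrt (2 * Real.pi * δ))⁻¹ * Real.exp (-(1/(2*δ)) * z^2) := by
  funext z; unfold g; ring_nf

lemma g_integrable {δ : ℝ} (hδ : 0 < δ) : Integrable (g δ) := by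
  rw [g_eq]
  exact (integrable_exp_neg_mul_sq (by positivity)).const_mul _

lemma g_integral {δ : ℝ} (hδ : 0 < δ) : ∫ z, g δ z = 1 := by
  rw [g_eq]
  rw [MeasureTheory.integral_const_mul, integral_gaussian]
  rw [show Real.pi / (1/(2*δ)) = 2 * Real.pi * δ by field_simp]
  rw [inv_mul_cancel₀ (by positivity)]

lemma g_even (δ z : ℝ) : g δ (-z) = g δ z := by unfold g; ring_nf

lemma g_anti {δ z w : ℝ} (hδ : 0 < δ) (h : z^2 ≤ w^2) : g δ w ≤ g δ z := by
  unfold g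
  refine mul_le_mul_of_nonneg_left ?_ (inv_nonneg.2 (Real.sqrt_nonneg _))
  refine Real.exp_le_exp.2 ?_
  rw [div_le_div_iff₀ (by positivity) (by positivity)]
  nlinarith



section Tail
variable {μ : Measure ℝ} [SigmaFinite μ] [NullSingletonClass μ] {f : ℝ → ℝ}

lemma ae_ne (y₀ : ℝ) : ∀ᵐ x ∂μ, x ≠ y₀ := by
  refine ae_iff.2 ?_
  simpa using measure_singleton (μ := μ) y₀

lemma continuous_tail (hf : Integrable f μ) :
    Continuous (fun y => ∫ x in Ioi y, f x ∂μ) := by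
  have hrw : (fun y => ∫ x in Ioi y, f x ∂μ) = fun y => ∫ x, (Ioi y).indicator f x ∂μ := by
    funext y; rw [integral_indicator measurableSet_Ioi]
  rw [continuous_iff_continuousAt, hrw]
  intro y₀
  refine continuousAt_of_dominated ?_ ?_ hf.norm ?_
  · exact .of_forall fun y => hf.aestronglyMeasurable.indicator measurableSet_Ioi
  · exact .of_forall fun _ => .of_forall fun x => norm_indicator_le_norm_self f x
  · filter_upwards [ae_ne y₀] with x hx
    rcases lt_or_gt_of_ne hx with h | h
    · refine Filter.EventuallyEq.continuousAt (y := (0:ℝ)) ?_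
      filter_upwards [isOpen_Ioi.eventually_mem (show y₀ ∈ Ioi x from h)] with y hy
      have : x ∉ Ioi y := by simpa using le_of_lt hy
      simp [Set.indicator_apply, this]
    · refine Filter.EventuallyEq.continuousAt (y := f x) ?_
      filter_upwards [isOpen_Iio.eventually_mem (show y₀ ∈ Iio x from h)] with y hy
      have : x ∈ Ioi y := hy
      simp [Set.indicator_apply, this]

lemma tendsto_tail (hf : Integrable f μ) :
    Tendsto (fun y => ∫ x in Ioi y, f x ∂μ) atTop (𝓝 0) := by
  have hrw : (fun y => ∫ x in Ioi y, f x ∂μ) = fun y => ∫ x, (Ioi y).indicator f x ∂μ := by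
    funext y; rw [integral_indicator measurableSet_Ioi]
  rw [hrw]
  have h0 : (0:ℝ) = ∫ (_ : ℝ), (0:ℝ) ∂μ := by simp
  rw [h0]
  refine tendsto_integral_filter_of_dominated_convergence (fun x => ‖f x‖)
    ?_ ?_ hf.norm ?_
  · exact .of_forall fun y => hf.aestronglyMeasurable.indicator measurableSet_Ioi
  · exact .of_forall fun _ => .of_forall fun x => norm_indicator_le_norm_self f x
  · refine .of_forall fun x => ?_
    refine Tendsto.congr' ?_ tendsto_const_nhds
    filter_upwards [eventually_ge_atTop x] with y hy
    simp [Set.indicator_apply, mem_Ioi, not_lt.2 hy]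

lemma tail_anti (hf : Integrable f μ) (h0 : ∀ x, 0 ≤ f x) {y y' : ℝ} (h : y ≤ y') :
    (∫ x in Ioi y', f x ∂μ) ≤ ∫ x in Ioi y, f x ∂μ := by
  refine setIntegral_mono_set hf.integrableOn (.of_forall h0) (.of_forall ?_)
  exact fun x hx => lt_of_le_of_lt h hx

lemma tail_nonneg (h0 : ∀ x, 0 ≤ f x) (y : ℝ) : 0 ≤ ∫ x in Ioi y, f x ∂μ :=
  setIntegral_nonneg measurableSet_Ioi fun x _ => h0 x

end Tail



noncomputable def Psi (δ y : ℝ) : ℝ := ∫ z in Ioi y, g δ z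

lemma Psi_nonneg (δ y : ℝ) : 0 ≤ Psi δ y :=
  setIntegral_nonneg measurableSet_Ioi fun x _ => g_nonneg δ x

lemma Psi_le_one {δ : ℝ} (hδ : 0 < δ) (y : ℝ) : Psi δ y ≤ 1 := by
  rw [← g_integral hδ]
  exact setIntegral_le_integral (g_integrable hδ) (.of_forall fun x => g_nonneg δ x)

lemma integral_Ioi_shift {δ : ℝ} (a r : ℝ) :
    ∫ x in Ioi r, g δ (x - a) = Psi δ (r - a) := by
  have key : ∀ x : ℝ, (Ioi r).indicator (fun x => g δ (x - a)) x
      = (Ioi (r - a)).indicator (g δ) (x - a) := by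
    intro x
    simp only [Set.indicator_apply, mem_Ioi, sub_lt_sub_iff_right]
  rw [← integral_indicator measurableSet_Ioi]
  calc ∫ x, (Ioi r).indicator (fun x => g δ (x - a)) x
      = ∫ x, (Ioi (r - a)).indicator (g δ) (x - a) := by simp_rw [key]
    _ = ∫ x, (Ioi (r - a)).indicator (g δ) x := by
        exact integral_sub_right_eq_self ((Ioi (r - a)).indicator (g δ)) a
    _ = Psi δ (r - a) := integral_indicator measurableSet_Ioi

lemma integral_Ioi_shift' {δ : ℝ} (a r : ℝ) :
    ∫ x in Ioi r, g δ (x + a) = Psi δ (r + a) := by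
  have := integral_Ioi_shift (δ := δ) (-a) r
  simpa [sub_neg_eq_add] using this

lemma Psi_reflect {δ : ℝ} (hδ : 0 < δ) (y : ℝ) : Psi δ (-y) + Psi δ y = 1 := by
  have h1 : Psi δ (-y) = ∫ x in Iic y, g δ x := by
    rw [Psi]
    rw [show (∫ z in Ioi (-y), g δ z) = ∫ z in Ioi (-y), g δ (-z) from
      setIntegral_congr_fun measurableSet_Ioi fun x _ => (g_even δ x).symm]
    rw [integral_comp_neg_Ioi]
    norm_num
  rw [h1, Psi]
  rw [intervalIntegral.integral_Iic_add_Ioi (g_integrable hδ).integrableOn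
    (g_integrable hδ).integrableOn]
  exact g_integral hδ

lemma two_Psi_zero {δ : ℝ} (hδ : 0 < δ) : 2 * Psi δ 0 = 1 := by
  have := Psi_reflect hδ 0
  simpa [neg_zero, two_mul] using this

lemma Psi_split {δ : ℝ} (hδ : 0 < δ) {a b : ℝ} (hab : a ≤ b) :
    Psi δ a = (∫ z in Ioc a b, g δ z) + Psi δ b := by
  rw [Psi, Psi, ← setIntegral_union (Set.Ioc_disjoint_Ioi le_rfl) measurableSet_Ioi
    (g_integrable hδ).integrableOn (g_integrable hδ).integrableOn,
    Set.Ioc_union_Ioi_eq_Ioi hab]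

/-- The key representation of `Ψ(r-s) + Ψ(r+s)`. -/
lemma Phi_eq {δ : ℝ} (hδ : 0 < δ) (r : ℝ) {s : ℝ} (hs : 0 ≤ s) :
    Psi δ (r - s) + Psi δ (r + s)
      = 2 * Psi δ r + ∫ t in Ioc 0 s, (g δ (r - t) - g δ (r + t)) := by
  have e1 : (∫ t in (0:ℝ)..s, g δ (r - t)) = ∫ z in Ioc (r - s) r, g δ z := by
    rw [intervalIntegral.integral_comp_sub_left (g δ) r, sub_zero]
    exact intervalIntegral.integral_of_le (by linarith)
  have e2 : (∫ t in (0:ℝ)..s, g δ (r + t)) = ∫ z in Ioc r (r + s), g δ z := by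
    rw [intervalIntegral.integral_comp_add_left (g δ) r, add_zero]
    exact intervalIntegral.integral_of_le (by linarith)
  have h1 : Psi δ (r - s) = (∫ t in (0:ℝ)..s, g δ (r - t)) + Psi δ r := by
    rw [Psi_split hδ (show r - s ≤ r by linarith), e1]
  have h2 : Psi δ r = (∫ t in (0:ℝ)..s, g δ (r + t)) + Psi δ (r + s) := by
    rw [Psi_split hδ (show r ≤ r + s by linarith), e2]
  have hint1 : IntervalIntegrable (fun t => g δ (r - t)) volume 0 s :=
    ((g_cont δ).comp (by continuity)).intervalIntegrable 0 s
  have hint2 : IntervalIntegrable (fun t => g δ (r + t)) volume 0 s :=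
    ((g_cont δ).comp (by continuity)).intervalIntegrable 0 s
  have h3 : ∫ t in Ioc 0 s, (g δ (r - t) - g δ (r + t))
      = (∫ t in (0:ℝ)..s, g δ (r - t)) - ∫ t in (0:ℝ)..s, g δ (r + t) := by
    rw [← intervalIntegral.integral_sub hint1 hint2,
      intervalIntegral.integral_of_le hs]
  rw [h3]
  linarith [h1, h2]



lemma Gneum_eq (δ x x' : ℝ) : Gneum δ x x' = g δ (x - x') + g δ (x + x') := by
  simp [Gneum, g, mul_add]

lemma Gneum_nonneg (δ x x' : ℝ) : 0 ≤ Gneum δ x x' := by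
  rw [Gneum_eq]; exact add_nonneg (g_nonneg _ _) (g_nonneg _ _)

lemma g_int_sub {δ : ℝ} (hδ : 0 < δ) (a : ℝ) : Integrable (fun x => g δ (x - a)) :=
  (g_integrable hδ).comp_sub_right a

lemma g_int_add {δ : ℝ} (hδ : 0 < δ) (a : ℝ) : Integrable (fun x => g δ (x + a)) := by
  simpa [sub_neg_eq_add] using (g_integrable hδ).comp_sub_right (-a)

lemma g_rev (δ r t : ℝ) : g δ (r - t) = g δ (t - r) := by
  rw [← g_even δ (t - r)]; ring_nf

lemma h_nonneg {δ r t : ℝ} (hδ : 0 < δ) (hr : 0 ≤ r) (ht : 0 ≤ t) :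
    0 ≤ g δ (r - t) - g δ (r + t) :=
  sub_nonneg.2 (g_anti hδ (by nlinarith))

lemma Psi_cont {δ : ℝ} (hδ : 0 < δ) : Continuous (Psi δ) :=
  continuous_tail (g_integrable hδ)

/-- The tail of `ρ` with respect to the measure restricted to `(0,∞)`. -/
noncomputable def tl (ρ : ℝ → ℝ) (t : ℝ) : ℝ :=
  ∫ x in Ioi t, ρ x ∂(volume.restrict (Ioi (0:ℝ)))

lemma tl_eq {ρ : ℝ → ℝ} {t : ℝ} (ht : 0 ≤ t) : tl ρ t = ∫ x in Ioi t, ρ x := by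
  rw [tl, Measure.restrict_restrict measurableSet_Ioi, Set.Ioi_inter_Ioi, max_eq_left ht]

section Heat

variable {δ : ℝ} {ρ : ℝ → ℝ}

lemma tl_cont (hi : Integrable ρ (volume.restrict (Ioi (0:ℝ)))) : Continuous (tl ρ) :=
  continuous_tail hi

lemma tl_nonneg (h0 : ∀ x, 0 ≤ ρ x) (t : ℝ) : 0 ≤ tl ρ t := tail_nonneg h0 t

lemma tl_anti (hi : Integrable ρ (volume.restrict (Ioi (0:ℝ)))) (h0 : ∀ x, 0 ≤ ρ x)
    {t t' : ℝ} (h : t ≤ t') : tl ρ t' ≤ tl ρ t := tail_anti hi h0 h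

lemma fub1_integrable (hδ : 0 < δ) (h0 : ∀ x, 0 ≤ ρ x)
    (hi : Integrable ρ (volume.restrict (Ioi (0:ℝ)))) (r : ℝ) :
    Integrable (fun p : ℝ × ℝ => Gneum δ p.1 p.2 * ρ p.2)
      ((volume.restrict (Ioi r)).prod (volume.restrict (Ioi (0:ℝ)))) := by
  have hGc : Continuous (fun p : ℝ × ℝ => Gneum δ p.1 p.2) := by
    simp only [Gneum_eq]
    exact ((g_cont δ).comp (continuous_fst.sub continuous_snd)).add
      ((g_cont δ).comp (continuous_fst.add continuous_snd))
  have hmeas : AEStronglyMeasurable (fun p : ℝ × ℝ => Gneum δ p.1 p.2 * ρ p.2)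
      ((volume.restrict (Ioi r)).prod (volume.restrict (Ioi (0:ℝ)))) :=
    hGc.aestronglyMeasurable.mul hi.aestronglyMeasurable.comp_snd
  refine (integrable_prod_iff' hmeas).2 ⟨?_, ?_⟩
  · refine .of_forall fun x' => ?_
    have : (fun x => Gneum δ x x' * ρ x') = fun x => (g δ (x - x') + g δ (x + x')) * ρ x' := by
      funext x; rw [Gneum_eq]
    rw [this]
    exact (((g_int_sub hδ x').add (g_int_add hδ x')).restrict).mul_const _
  · have key : (fun x' => ∫ x, ‖Gneum δ x x' * ρ x'‖ ∂(volume.restrict (Ioi r)))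
        = fun x' => (Psi δ (r - x') + Psi δ (r + x')) * ρ x' := by
      funext x'
      have h1 : ∀ x, ‖Gneum δ x x' * ρ x'‖ = (g δ (x - x') + g δ (x + x')) * ρ x' := by
        intro x
        rw [Real.norm_of_nonneg (mul_nonneg (Gneum_nonneg δ x x') (h0 x')), Gneum_eq]
      simp_rw [h1]
      rw [MeasureTheory.integral_mul_const]
      congr 1
      rw [integral_add ((g_int_sub hδ x').restrict) ((g_int_add hδ x').restrict),
        integral_Ioi_shift, integral_Ioi_shift']
    rw [key]
    refine Integrable.mono (hi.const_mul 2) ?_ ?_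
    · exact (((Psi_cont hδ).comp (continuous_const.sub continuous_id)).add
        ((Psi_cont hδ).comp (continuous_const.add continuous_id))).aestronglyMeasurable.mul
        hi.aestronglyMeasurable
    · refine .of_forall fun x' => ?_
      have hP : 0 ≤ Psi δ (r - x') + Psi δ (r + x') :=
        add_nonneg (Psi_nonneg _ _) (Psi_nonneg _ _)
      have hP2 : Psi δ (r - x') + Psi δ (r + x') ≤ 2 := by
        linarith [Psi_le_one hδ (r - x'), Psi_le_one hδ (r + x')]
      rw [Real.norm_of_nonneg (mul_nonneg hP (h0 x')), Real.norm_of_nonneg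
        (mul_nonneg (by norm_num) (h0 x'))]
      exact mul_le_mul_of_nonneg_right hP2 (h0 x')

lemma heat_tail_1 (hδ : 0 < δ) (h0 : ∀ x, 0 ≤ ρ x)
    (hi : Integrable ρ (volume.restrict (Ioi (0:ℝ)))) (r : ℝ) :
    (∫ x in Ioi r, ∫ x' in Ioi (0:ℝ), Gneum δ x x' * ρ x')
      = ∫ x' in Ioi (0:ℝ), ρ x' * (Psi δ (r - x') + Psi δ (r + x')) := by
  have swap := MeasureTheory.integral_integral_swap
    (f := fun x x' => Gneum δ x x' * ρ x')
    (μ := volume.restrict (Ioi r)) (ν := volume.restrict (Ioi (0:ℝ)))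
    (fub1_integrable hδ h0 hi r)
  rw [swap]
  refine setIntegral_congr_fun measurableSet_Ioi fun x' _ => ?_
  have : (fun x => Gneum δ x x' * ρ x') = fun x => (g δ (x - x') + g δ (x + x')) * ρ x' := by
    funext x; rw [Gneum_eq]
  rw [this, MeasureTheory.integral_mul_const,
    integral_add ((g_int_sub hδ x').restrict) ((g_int_add hδ x').restrict),
    integral_Ioi_shift, integral_Ioi_shift', mul_comm]


lemma intIoc_nonneg (hδ : 0 < δ) {r : ℝ} (hr : 0 ≤ r) (x' : ℝ) :
    0 ≤ ∫ t in Ioc (0:ℝ) x', (g δ (r - t) - g δ (r + t)) :=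
  setIntegral_nonneg measurableSet_Ioc fun t ht => h_nonneg hδ hr (le_of_lt ht.1)

lemma intIoc_le_one (hδ : 0 < δ) {r : ℝ} (hr : 0 ≤ r) (x' : ℝ) :
    (∫ t in Ioc (0:ℝ) x', (g δ (r - t) - g δ (r + t))) ≤ 1 := by
  have hc1 : Continuous (fun t => g δ (r - t)) :=
    (g_cont δ).comp (continuous_const.sub continuous_id)
  have hc2 : Continuous (fun t => g δ (r + t)) :=
    (g_cont δ).comp (continuous_const.add continuous_id)
  have step1 : (∫ t in Ioc (0:ℝ) x', (g δ (r - t) - g δ (r + t)))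
      ≤ ∫ t in Ioc (0:ℝ) x', g δ (r - t) := by
    refine setIntegral_mono_on ((hc1.sub hc2).integrableOn_Ioc) (hc1.integrableOn_Ioc)
      measurableSet_Ioc fun t _ => ?_
    have := g_nonneg δ (r + t); linarith
  have step2 : (∫ t in Ioc (0:ℝ) x', g δ (r - t)) ≤ 1 := by
    have he : (fun t => g δ (r - t)) = fun t => g δ (t - r) := by
      funext t; exact g_rev δ r t
    rw [he]
    calc (∫ t in Ioc (0:ℝ) x', g δ (t - r))
        ≤ ∫ t, g δ (t - r) :=
          setIntegral_le_integral (g_int_sub hδ r) (.of_forall fun t => g_nonneg _ _)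
      _ = 1 := by rw [integral_sub_right_eq_self (g δ) r]; exact g_integral hδ
  linarith

lemma hF_integrable (hδ : 0 < δ) (h0 : ∀ x, 0 ≤ ρ x)
    (hi : Integrable ρ (volume.restrict (Ioi (0:ℝ)))) {r : ℝ} (hr : 0 ≤ r) :
    Integrable (fun t => (g δ (r - t) - g δ (r + t)) * tl ρ t)
      (volume.restrict (Ioi (0:ℝ))) := by
  have hc1 : Continuous (fun t => g δ (r - t)) :=
    (g_cont δ).comp (continuous_const.sub continuous_id)
  have hc2 : Continuous (fun t => g δ (r + t)) :=
    (g_cont δ).comp (continuous_const.add continuous_id)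
  refine Integrable.mono' (((g_int_sub hδ r).restrict).const_mul (tl ρ 0)) ?_ ?_
  · exact ((hc1.sub hc2).mul (tl_cont hi)).aestronglyMeasurable
  · filter_upwards [ae_restrict_mem measurableSet_Ioi] with t ht
    have h1 : 0 ≤ g δ (r - t) - g δ (r + t) := h_nonneg hδ hr (le_of_lt ht)
    have h2 : 0 ≤ tl ρ t := tl_nonneg h0 t
    rw [Real.norm_of_nonneg (mul_nonneg h1 h2)]
    calc (g δ (r - t) - g δ (r + t)) * tl ρ t
        ≤ g δ (r - t) * tl ρ 0 := by
          refine mul_le_mul ?_ (tl_anti hi h0 (le_of_lt ht)) h2 (g_nonneg _ _)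
          have := g_nonneg δ (r + t); linarith
      _ = tl ρ 0 * g δ (t - r) := by rw [g_rev]; ring

lemma fub2_integrable (hδ : 0 < δ) (h0 : ∀ x, 0 ≤ ρ x)
    (hi : Integrable ρ (volume.restrict (Ioi (0:ℝ)))) {r : ℝ} (hr : 0 ≤ r) :
    Integrable (fun p : ℝ × ℝ =>
        ({q : ℝ × ℝ | 0 < q.1 ∧ q.1 ≤ q.2}.indicator
          (fun q => (g δ (r - q.1) - g δ (r + q.1)) * ρ q.2)) p)
      ((volume.restrict (Ioi (0:ℝ))).prod (volume.restrict (Ioi (0:ℝ)))) := by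
  have hA : MeasurableSet {q : ℝ × ℝ | 0 < q.1 ∧ q.1 ≤ q.2} := by
    refine MeasurableSet.inter ?_ ?_
    · exact measurableSet_lt measurable_const measurable_fst
    · exact measurableSet_le measurable_fst measurable_snd
  have hc1 : Continuous (fun t : ℝ => g δ (r - t)) :=
    (g_cont δ).comp (continuous_const.sub continuous_id)
  have hc2 : Continuous (fun t : ℝ => g δ (r + t)) :=
    (g_cont δ).comp (continuous_const.add continuous_id)
  have hmeas : AEStronglyMeasurable (fun p : ℝ × ℝ =>
      ({q : ℝ × ℝ | 0 < q.1 ∧ q.1 ≤ q.2}.indicator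
        (fun q => (g δ (r - q.1) - g δ (r + q.1)) * ρ q.2)) p)
      ((volume.restrict (Ioi (0:ℝ))).prod (volume.restrict (Ioi (0:ℝ)))) := by
    refine AEStronglyMeasurable.indicator ?_ hA
    exact (((hc1.sub hc2).comp continuous_fst).aestronglyMeasurable).mul
      hi.aestronglyMeasurable.comp_snd
  refine (integrable_prod_iff hmeas).2 ⟨?_, ?_⟩
  · refine .of_forall fun t => ?_
    by_cases ht : 0 < t
    · have : (fun x' => ({q : ℝ × ℝ | 0 < q.1 ∧ q.1 ≤ q.2}.indicator
          (fun q => (g δ (r - q.1) - g δ (r + q.1)) * ρ q.2)) (t, x'))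
          = (Ici t).indicator (fun x' => (g δ (r - t) - g δ (r + t)) * ρ x') := by
        funext x'
        simp only [Set.indicator_apply, mem_setOf_eq, mem_Ici, ht, true_and]
      rw [this]
      exact (hi.const_mul _).indicator measurableSet_Ici
    · have : (fun x' => ({q : ℝ × ℝ | 0 < q.1 ∧ q.1 ≤ q.2}.indicator
          (fun q => (g δ (r - q.1) - g δ (r + q.1)) * ρ q.2)) (t, x'))
          = fun _ => (0:ℝ) := by
        funext x'
        simp only [Set.indicator_apply, mem_setOf_eq, ht, false_and, if_false]
      rw [this]
      exact integrable_zero _ _ _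
  · refine Integrable.congr (hF_integrable hδ h0 hi hr) ?_
    filter_upwards [ae_restrict_mem measurableSet_Ioi] with t ht
    have ht' : 0 < t := ht
    have hnn : 0 ≤ g δ (r - t) - g δ (r + t) := h_nonneg hδ hr (le_of_lt ht)
    have : (fun x' => ‖({q : ℝ × ℝ | 0 < q.1 ∧ q.1 ≤ q.2}.indicator
        (fun q => (g δ (r - q.1) - g δ (r + q.1)) * ρ q.2)) (t, x')‖)
        = (Ici t).indicator (fun x' => (g δ (r - t) - g δ (r + t)) * ρ x') := by
      funext x'
      simp only [Set.indicator_apply, mem_setOf_eq, mem_Ici, ht', true_and]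
      by_cases hx : t ≤ x'
      · simp only [hx, if_true]
        exact Real.norm_of_nonneg (mul_nonneg hnn (h0 x'))
      · simp [hx]
    symm
    calc (∫ x', ‖({q : ℝ × ℝ | 0 < q.1 ∧ q.1 ≤ q.2}.indicator
          (fun q => (g δ (r - q.1) - g δ (r + q.1)) * ρ q.2)) (t, x')‖
            ∂(volume.restrict (Ioi (0:ℝ))))
        = ∫ x' in Ici t, (g δ (r - t) - g δ (r + t)) * ρ x'
            ∂(volume.restrict (Ioi (0:ℝ))) := by
          rw [this, integral_indicator measurableSet_Ici]
      _ = (g δ (r - t) - g δ (r + t)) * tl ρ t := by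
          rw [setIntegral_congr_set (Ioi_ae_eq_Ici (μ := volume.restrict (Ioi (0:ℝ))) (a := t)).symm]
          rw [MeasureTheory.integral_const_mul]
          rfl

lemma fub2 (hδ : 0 < δ) (h0 : ∀ x, 0 ≤ ρ x)
    (hi : Integrable ρ (volume.restrict (Ioi (0:ℝ)))) {r : ℝ} (hr : 0 ≤ r) :
    (∫ x' in Ioi (0:ℝ), ρ x' * ∫ t in Ioc (0:ℝ) x', (g δ (r - t) - g δ (r + t)))
      = ∫ t in Ioi (0:ℝ), (g δ (r - t) - g δ (r + t)) * tl ρ t := by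
  set q : ℝ × ℝ → ℝ := fun p =>
    ({q : ℝ × ℝ | 0 < q.1 ∧ q.1 ≤ q.2}.indicator
      (fun q => (g δ (r - q.1) - g δ (r + q.1)) * ρ q.2)) p with hq
  have swap := MeasureTheory.integral_integral_swap
    (f := fun t x' => q (t, x'))
    (μ := volume.restrict (Ioi (0:ℝ))) (ν := volume.restrict (Ioi (0:ℝ)))
    (fub2_integrable hδ h0 hi hr)
  have inner1 : ∀ x' : ℝ, (∫ t, q (t, x') ∂(volume.restrict (Ioi (0:ℝ))))
      = ρ x' * ∫ t in Ioc (0:ℝ) x', (g δ (r - t) - g δ (r + t)) := by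
    intro x'
    have hfun : (fun t => q (t, x'))
        = (Ioc (0:ℝ) x').indicator (fun t => (g δ (r - t) - g δ (r + t)) * ρ x') := by
      funext t
      simp [hq, Set.indicator_apply, mem_setOf_eq, mem_Ioc]
    rw [hfun, integral_indicator measurableSet_Ioc,
      Measure.restrict_restrict measurableSet_Ioc,
      inter_eq_left.mpr Ioc_subset_Ioi_self, MeasureTheory.integral_mul_const, mul_comm]
  have inner2 : ∀ᵐ t ∂(volume.restrict (Ioi (0:ℝ))),
      (∫ x', q (t, x') ∂(volume.restrict (Ioi (0:ℝ))))
        = (g δ (r - t) - g δ (r + t)) * tl ρ t := by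
    filter_upwards [ae_restrict_mem measurableSet_Ioi] with t ht
    have ht' : 0 < t := ht
    have hfun : (fun x' => q (t, x'))
        = (Ici t).indicator (fun x' => (g δ (r - t) - g δ (r + t)) * ρ x') := by
      funext x'
      simp [hq, Set.indicator_apply, mem_setOf_eq, mem_Ici, ht']
    rw [hfun, integral_indicator measurableSet_Ici,
      setIntegral_congr_set (Ioi_ae_eq_Ici (μ := volume.restrict (Ioi (0:ℝ))) (a := t)).symm,
      MeasureTheory.integral_const_mul]
    rfl
  calc (∫ x' in Ioi (0:ℝ), ρ x' * ∫ t in Ioc (0:ℝ) x', (g δ (r - t) - g δ (r + t)))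
      = ∫ x', (∫ t, q (t, x') ∂(volume.restrict (Ioi (0:ℝ))))
          ∂(volume.restrict (Ioi (0:ℝ))) := by
        refine (integral_congr_ae (.of_forall fun x' => ?_))
        exact (inner1 x').symm
    _ = ∫ t, (∫ x', q (t, x') ∂(volume.restrict (Ioi (0:ℝ))))
          ∂(volume.restrict (Ioi (0:ℝ))) := swap.symm
    _ = ∫ t in Ioi (0:ℝ), (g δ (r - t) - g δ (r + t)) * tl ρ t :=
        integral_congr_ae inner2

lemma heat_tail_2 (hδ : 0 < δ) (h0 : ∀ x, 0 ≤ ρ x)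
    (hi : Integrable ρ (volume.restrict (Ioi (0:ℝ)))) {r : ℝ} (hr : 0 ≤ r) :
    (∫ x' in Ioi (0:ℝ), ρ x' * (Psi δ (r - x') + Psi δ (r + x')))
      = 2 * Psi δ r * tl ρ 0
        + ∫ x' in Ioi (0:ℝ), ρ x' * ∫ t in Ioc (0:ℝ) x', (g δ (r - t) - g δ (r + t)) := by
  have hc1 : Continuous (fun t : ℝ => g δ (r - t)) :=
    (g_cont δ).comp (continuous_const.sub continuous_id)
  have hc2 : Continuous (fun t : ℝ => g δ (r + t)) :=
    (g_cont δ).comp (continuous_const.add continuous_id)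
  have hprim : Continuous (fun x' : ℝ => ∫ t in (0:ℝ)..x', (g δ (r - t) - g δ (r + t))) :=
    intervalIntegral.continuous_primitive
      (fun a b => ((hc1.sub hc2)).intervalIntegrable a b) 0
  have hae : (fun x' : ℝ => ∫ t in (0:ℝ)..x', (g δ (r - t) - g δ (r + t)))
      =ᵐ[volume.restrict (Ioi (0:ℝ))]
      (fun x' : ℝ => ∫ t in Ioc (0:ℝ) x', (g δ (r - t) - g δ (r + t))) := by
    filter_upwards [ae_restrict_mem measurableSet_Ioi] with x' hx'
    exact intervalIntegral.integral_of_le (le_of_lt hx')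
  have I2 : Integrable (fun x' => ρ x' * ∫ t in Ioc (0:ℝ) x', (g δ (r - t) - g δ (r + t)))
      (volume.restrict (Ioi (0:ℝ))) := by
    refine Integrable.mono hi
      (hi.aestronglyMeasurable.mul (hprim.aestronglyMeasurable.congr hae)) ?_
    refine .of_forall fun x' => ?_
    have h1 := intIoc_nonneg hδ hr x'
    have h2 := intIoc_le_one hδ hr x'
    rw [Real.norm_of_nonneg (mul_nonneg (h0 x') h1), Real.norm_of_nonneg (h0 x')]
    nlinarith [h0 x']
  have I1 : Integrable (fun x' => ρ x' * (2 * Psi δ r)) (volume.restrict (Ioi (0:ℝ))) :=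
    hi.mul_const _
  have hsplit : (∫ x' in Ioi (0:ℝ), ρ x' * (Psi δ (r - x') + Psi δ (r + x')))
      = ∫ x' in Ioi (0:ℝ), (ρ x' * (2 * Psi δ r)
          + ρ x' * ∫ t in Ioc (0:ℝ) x', (g δ (r - t) - g δ (r + t))) := by
    refine setIntegral_congr_fun measurableSet_Ioi fun x' hx' => ?_
    rw [Phi_eq hδ r (le_of_lt hx'), mul_add]
  rw [hsplit, integral_add I1 I2, MeasureTheory.integral_mul_const]
  have : tl ρ 0 = ∫ x' in Ioi (0:ℝ), ρ x' := tl_eq le_rfl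
  rw [this]
  ring

lemma heat_tail (hδ : 0 < δ) (h0 : ∀ x, 0 ≤ ρ x)
    (hi : Integrable ρ (volume.restrict (Ioi (0:ℝ)))) (c : ℝ) {r : ℝ} (hr : 0 ≤ r) :
    (∫ x in Ioi r, (c * Gneum δ x 0 + ∫ x' in Ioi (0:ℝ), Gneum δ x x' * ρ x'))
      = 2 * Psi δ r * (c + tl ρ 0)
        + ∫ t in Ioi (0:ℝ), (g δ (r - t) - g δ (r + t)) * tl ρ t := by
  have hIc : Integrable (fun x => c * Gneum δ x 0) (volume.restrict (Ioi r)) := by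
    have : (fun x => c * Gneum δ x 0) = fun x => c * (g δ (x - 0) + g δ (x + 0)) := by
      funext x; rw [Gneum_eq]
    rw [this]
    exact (((g_int_sub hδ 0).add (g_int_add hδ 0)).restrict).const_mul c
  have hIinner : Integrable (fun x => ∫ x' in Ioi (0:ℝ), Gneum δ x x' * ρ x')
      (volume.restrict (Ioi r)) := (fub1_integrable hδ h0 hi r).integral_prod_left
  rw [integral_add hIc hIinner]
  have e1 : (∫ x in Ioi r, c * Gneum δ x 0) = c * (Psi δ r + Psi δ r) := by
    have : (fun x => c * Gneum δ x 0) = fun x => c * (g δ (x - 0) + g δ (x + 0)) := by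
      funext x; rw [Gneum_eq]
    rw [this, MeasureTheory.integral_const_mul,
      integral_add ((g_int_sub hδ 0).restrict) ((g_int_add hδ 0).restrict),
      integral_Ioi_shift, integral_Ioi_shift', sub_zero, add_zero]
  rw [e1, heat_tail_1 hδ h0 hi r, heat_tail_2 hδ h0 hi hr, fub2 hδ h0 hi hr]
  ring

lemma heat_dens_integrable (hδ : 0 < δ) (h0 : ∀ x, 0 ≤ ρ x)
    (hi : Integrable ρ (volume.restrict (Ioi (0:ℝ)))) (c : ℝ) (r : ℝ) :
    Integrable (fun x => c * Gneum δ x 0 + ∫ x' in Ioi (0:ℝ), Gneum δ x x' * ρ x')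
      (volume.restrict (Ioi r)) := by
  have hIc : Integrable (fun x => c * Gneum δ x 0) (volume.restrict (Ioi r)) := by
    have : (fun x => c * Gneum δ x 0) = fun x => c * (g δ (x - 0) + g δ (x + 0)) := by
      funext x; rw [Gneum_eq]
    rw [this]
    exact (((g_int_sub hδ 0).add (g_int_add hδ 0)).restrict).const_mul c
  exact hIc.add (fub1_integrable hδ h0 hi r).integral_prod_left

end Heat


/-- Regular element of `𝓤`. -/
def Reg (u : UEl) : Prop :=
  0 ≤ u.1 ∧ (∀ r, 0 ≤ u.2 r) ∧ Integrable u.2 (volume.restrict (Ioi (0:ℝ)))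

lemma tailF_eq_tl {u : UEl} (h1 : u.1 = 0) {r : ℝ} (hr : 0 ≤ r) :
    tailF u r = tl u.2 r := by
  rw [tailF, tl_eq hr, h1, ite_self, zero_add]

lemma tailF_pos {u : UEl} {r : ℝ} (hr : 0 < r) : tailF u r = tl u.2 r := by
  rw [tailF, tl_eq (le_of_lt hr), if_neg (ne_of_gt hr), zero_add]

lemma tailF_zero {u : UEl} : tailF u 0 = u.1 + tl u.2 0 := by
  rw [tailF, tl_eq le_rfl, if_pos rfl]

section Cut

variable {j δ : ℝ} {u : UEl}

lemma Rdelta_spec (hjδ : 0 < j * δ) (hu : Reg u) (h1 : u.1 = 0)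
    (hm : j * δ < tailF u 0) :
    0 ≤ Rdelta j δ u ∧ tl u.2 (Rdelta j δ u) = j * δ := by
  obtain ⟨h01, h0, hi⟩ := hu
  have hSeq : {r : ℝ | 0 ≤ r ∧ tailF u r = j * δ} = Ici 0 ∩ (tl u.2) ⁻¹' {j * δ} := by
    ext r
    simp only [mem_setOf_eq, mem_inter_iff, mem_Ici, mem_preimage, mem_singleton_iff]
    constructor
    · rintro ⟨hr, he⟩; exact ⟨hr, by rw [← tailF_eq_tl h1 hr]; exact he⟩
    · rintro ⟨hr, he⟩; exact ⟨hr, by rw [tailF_eq_tl h1 hr]; exact he⟩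
  have hclosed : IsClosed {r : ℝ | 0 ≤ r ∧ tailF u r = j * δ} := by
    rw [hSeq]
    exact isClosed_Ici.inter (isClosed_singleton.preimage (tl_cont hi))
  have hbdd : BddBelow {r : ℝ | 0 ≤ r ∧ tailF u r = j * δ} := ⟨0, fun x hx => hx.1⟩
  have hne : {r : ℝ | 0 ≤ r ∧ tailF u r = j * δ}.Nonempty := by
    have hten : Tendsto (tl u.2) atTop (𝓝 0) := tendsto_tail hi
    obtain ⟨X, hX1, hX0⟩ :=
      ((hten.eventually (gt_mem_nhds hjδ)).and (eventually_ge_atTop (0:ℝ))).exists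
    have hcont : ContinuousOn (tl u.2) (Icc 0 X) := (tl_cont hi).continuousOn
    have hsub := intermediate_value_Icc' hX0 hcont
    have hmem : j * δ ∈ Icc (tl u.2 X) (tl u.2 0) := by
      constructor
      · exact le_of_lt hX1
      · rw [tailF_eq_tl h1 le_rfl] at hm; exact le_of_lt hm
    obtain ⟨r₀, hr₀mem, hr₀⟩ := hsub hmem
    exact ⟨r₀, hr₀mem.1, by rw [tailF_eq_tl h1 hr₀mem.1]; exact hr₀⟩
  have := hclosed.csInf_mem hne hbdd
  rw [Rdelta]
  exact ⟨this.1, by rw [← tailF_eq_tl h1 this.1]; exact this.2⟩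

lemma cut_integral (hu : Reg u) {r : ℝ} (hr : 0 ≤ r) (hR : 0 ≤ Rdelta j δ u) :
    (∫ x in Ioi r, (cutPaste j δ u).2 x)
      = ∫ x in Ioc r (Rdelta j δ u), u.2 x := by
  have : (cutPaste j δ u).2 = Set.indicator (Set.Icc 0 (Rdelta j δ u)) u.2 := rfl
  have hset : Icc 0 (Rdelta j δ u) ∩ Ioi r = Ioc r (Rdelta j δ u) := by
    ext x
    simp only [mem_inter_iff, mem_Icc, mem_Ioi, mem_Ioc]
    constructor
    · rintro ⟨⟨_, hx2⟩, hx3⟩; exact ⟨hx3, hx2⟩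
    · rintro ⟨hx1, hx2⟩; exact ⟨⟨le_of_lt (lt_of_le_of_lt hr hx1), hx2⟩, hx1⟩
  rw [this, integral_indicator measurableSet_Icc,
    Measure.restrict_restrict measurableSet_Icc, hset]

lemma tl_split (hu : Reg u) {r R : ℝ} (hr : 0 ≤ r) (hrR : r ≤ R) :
    tl u.2 r = (∫ x in Ioc r R, u.2 x) + tl u.2 R := by
  obtain ⟨h01, h0, hi⟩ := hu
  have hR : 0 ≤ R := le_trans hr hrR
  have hsub1 : Ioc r R ⊆ Ioi (0:ℝ) := fun x hx => lt_of_le_of_lt hr hx.1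
  have hsub2 : Ioi R ⊆ Ioi (0:ℝ) := fun x hx => lt_of_le_of_lt hR hx
  rw [tl_eq hr, tl_eq hR,
    ← setIntegral_union (Set.Ioc_disjoint_Ioi le_rfl) measurableSet_Ioi
      (MeasureTheory.IntegrableOn.mono_set hi hsub1)
      (MeasureTheory.IntegrableOn.mono_set hi hsub2), Set.Ioc_union_Ioi_eq_Ioi hrR]

lemma cutPaste_tailF_zero (hjδ : 0 < j * δ) (hu : Reg u) (h1 : u.1 = 0)
    (hm : j * δ < tailF u 0) :
    tailF (cutPaste j δ u) 0 = tailF u 0 := by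
  obtain ⟨hR0, hRval⟩ := Rdelta_spec hjδ hu h1 hm
  have := cut_integral (j := j) (δ := δ) hu le_rfl hR0
  have hsplit := tl_split hu le_rfl hR0
  rw [hRval] at hsplit
  rw [tailF, if_pos rfl, this, tailF_eq_tl h1 le_rfl,
    (show (cutPaste j δ u).1 = j * δ from rfl)]
  linarith

lemma cutPaste_tailF_pos (hjδ : 0 < j * δ) (hu : Reg u) (h1 : u.1 = 0)
    (hm : j * δ < tailF u 0) {r : ℝ} (hr : 0 < r) :
    tailF (cutPaste j δ u) r = max (tailF u r - j * δ) 0 := by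
  obtain ⟨hR0, hRval⟩ := Rdelta_spec hjδ hu h1 hm
  have hci := cut_integral (j := j) (δ := δ) hu (le_of_lt hr) hR0
  rw [tailF, if_neg (ne_of_gt hr), zero_add, hci, tailF_pos hr]
  by_cases hrR : r ≤ Rdelta j δ u
  · have hsplit := tl_split hu (le_of_lt hr) hrR
    rw [hRval] at hsplit
    have hge : j * δ ≤ tl u.2 r := by
      rw [← hRval]
      exact tl_anti hu.2.2 hu.2.1 hrR
    rw [max_eq_left (by linarith)]
    linarith
  · push_neg at hrR
    rw [Set.Ioc_eq_empty (by exact not_lt.2 (le_of_lt hrR)), setIntegral_empty]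
    have hle : tl u.2 r ≤ j * δ := by
      rw [← hRval]
      exact tl_anti hu.2.2 hu.2.1 (le_of_lt hrR)
    rw [max_eq_right (by linarith)]

lemma cutPaste_Reg (hjδ : 0 < j * δ) (hu : Reg u) : Reg (cutPaste j δ u) := by
  refine ⟨le_of_lt hjδ, fun r => ?_, hu.2.2.indicator measurableSet_Icc⟩
  show 0 ≤ Set.indicator (Set.Icc 0 (Rdelta j δ u)) u.2 r
  rw [Set.indicator_apply]
  split
  · exact hu.2.1 r
  · exact le_rfl

lemma cutPaste_atom : (cutPaste j δ u).1 = j * δ := rfl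

lemma cutPaste_mono (hjδ : 0 < j * δ) {v : UEl} (hu : Reg u) (hv : Reg v)
    (h1u : u.1 = 0) (h1v : v.1 = 0)
    (hmu : j * δ < tailF u 0) (hmv : j * δ < tailF v 0)
    (hle : Ule u v) : Ule (cutPaste j δ u) (cutPaste j δ v) := by
  intro r hr
  rcases eq_or_lt_of_le hr with h | h
  · rw [← h, cutPaste_tailF_zero hjδ hu h1u hmu, cutPaste_tailF_zero hjδ hv h1v hmv]
    exact hle 0 le_rfl
  · rw [cutPaste_tailF_pos hjδ hu h1u hmu h, cutPaste_tailF_pos hjδ hv h1v hmv h]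
    exact max_le_max (sub_le_sub_right (hle r hr) _) le_rfl

end Cut


section HeatU
variable {δ : ℝ} {u v : UEl}

lemma heat_tailF (hδ : 0 < δ) (hu : Reg u) {r : ℝ} (hr : 0 ≤ r) :
    tailF (heat δ u) r = 2 * Psi δ r * (u.1 + tl u.2 0)
      + ∫ t in Ioi (0:ℝ), (g δ (r - t) - g δ (r + t)) * tl u.2 t := by
  rw [tailF]
  have h1 : (if r = 0 then (heat δ u).1 else 0) = 0 := by split <;> rfl
  rw [h1, zero_add]
  exact heat_tail hδ hu.2.1 hu.2.2 u.1 hr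

lemma heat_Reg (hδ : 0 < δ) (hu : Reg u) : Reg (heat δ u) := by
  refine ⟨le_rfl, fun x => ?_, heat_dens_integrable hδ hu.2.1 hu.2.2 u.1 0⟩
  refine add_nonneg (mul_nonneg hu.1 (Gneum_nonneg _ _ _)) ?_
  exact setIntegral_nonneg measurableSet_Ioi fun x' _ =>
    mul_nonneg (Gneum_nonneg _ _ _) (hu.2.1 x')

lemma heat_mass (hδ : 0 < δ) (hu : Reg u) : tailF (heat δ u) 0 = tailF u 0 := by
  rw [heat_tailF hδ hu le_rfl, tailF_zero]
  have hz : ∀ t : ℝ, (g δ (0 - t) - g δ (0 + t)) * tl u.2 t = 0 := by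
    intro t
    rw [zero_sub, zero_add, g_even, sub_self, zero_mul]
  simp only [hz, integral_zero, add_zero, two_Psi_zero hδ, one_mul]

lemma heat_mono (hδ : 0 < δ) (hu : Reg u) (hv : Reg v) (hle : Ule u v) :
    Ule (heat δ u) (heat δ v) := by
  intro r hr
  rw [heat_tailF hδ hu hr, heat_tailF hδ hv hr]
  have hm0 : u.1 + tl u.2 0 ≤ v.1 + tl v.2 0 := by
    rw [← tailF_zero, ← tailF_zero]; exact hle 0 le_rfl
  refine add_le_add (mul_le_mul_of_nonneg_left hm0
    (mul_nonneg (by norm_num) (Psi_nonneg _ _))) ?_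
  refine integral_mono_ae (hF_integrable hδ hu.2.1 hu.2.2 hr)
    (hF_integrable hδ hv.2.1 hv.2.2 hr) ?_
  filter_upwards [ae_restrict_mem measurableSet_Ioi] with t ht
  have htl : tl u.2 t ≤ tl v.2 t := by
    rw [← tailF_pos (u := u) ht, ← tailF_pos (u := v) ht]
    exact hle t (le_of_lt ht)
  exact mul_le_mul_of_nonneg_left htl (h_nonneg hδ hr (le_of_lt ht))

end HeatU

end BarAux

open BarAux in
/-- monotonicity of the barriers in the initial datum. -/
theorem barriers_monotone (j δ : ℝ) (hj : 0 < j) (hδ : 0 < δ)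
    (u v : ℝ → ℝ) (hu : goodFn u) (hv : goodFn v)
    (hju : j * δ < ∫ x in Set.Ioi (0:ℝ), u x)
    (hjv : j * δ < ∫ x in Set.Ioi (0:ℝ), v x)
    (hle : Ule ((0:ℝ), u) ((0:ℝ), v)) :
    ∀ k : ℕ,
      Ule (Sminus j δ ((0:ℝ), u) k) (Sminus j δ ((0:ℝ), v) k) ∧
      Ule (Splus j δ ((0:ℝ), u) k) (Splus j δ ((0:ℝ), v) k) := by
  have hjδ : 0 < j * δ := mul_pos hj hδ
  set u0 : UEl := ((0:ℝ), u) with hu0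
  set v0 : UEl := ((0:ℝ), v) with hv0
  have hRu0 : Reg u0 := ⟨le_rfl, hu.1, hu.2.1⟩
  have hRv0 : Reg v0 := ⟨le_rfl, hv.1, hv.2.1⟩
  have hmu0 : j * δ < tailF u0 0 := by
    rw [tailF_zero, tl_eq le_rfl]; simpa [hu0] using hju
  have hmv0 : j * δ < tailF v0 0 := by
    rw [tailF_zero, tl_eq le_rfl]; simpa [hv0] using hjv
  have key : ∀ k : ℕ,
      (Reg (Sminus j δ u0 k) ∧ Reg (Sminus j δ v0 k) ∧
       j * δ < tailF (Sminus j δ u0 k) 0 ∧ j * δ < tailF (Sminus j δ v0 k) 0 ∧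
       Ule (Sminus j δ u0 k) (Sminus j δ v0 k)) ∧
      (Reg (Splus j δ u0 k) ∧ Reg (Splus j δ v0 k) ∧
       j * δ < tailF (Splus j δ u0 k) 0 ∧ j * δ < tailF (Splus j δ v0 k) 0 ∧
       (Splus j δ u0 k).1 = 0 ∧ (Splus j δ v0 k).1 = 0 ∧
       Ule (Splus j δ u0 k) (Splus j δ v0 k)) := by
    intro k
    induction k with
    | zero => exact ⟨⟨hRu0, hRv0, hmu0, hmv0, hle⟩, hRu0, hRv0, hmu0, hmv0, rfl, rfl, hle⟩
    | succ k ih =>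
      obtain ⟨⟨hRu, hRv, hmu, hmv, hUle⟩, hRu', hRv', hmu', hmv', hau', hav', hUle'⟩ := ih
      have hSmu : Sminus j δ u0 (k+1) = cutPaste j δ (heat δ (Sminus j δ u0 k)) := rfl
      have hSmv : Sminus j δ v0 (k+1) = cutPaste j δ (heat δ (Sminus j δ v0 k)) := rfl
      have hSpu : Splus j δ u0 (k+1) = heat δ (cutPaste j δ (Splus j δ u0 k)) := rfl
      have hSpv : Splus j δ v0 (k+1) = heat δ (cutPaste j δ (Splus j δ v0 k)) := rfl
      have hRhu := heat_Reg hδ hRu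
      have hRhv := heat_Reg hδ hRv
      have hmhu : j * δ < tailF (heat δ (Sminus j δ u0 k)) 0 := by
        rw [heat_mass hδ hRu]; exact hmu
      have hmhv : j * δ < tailF (heat δ (Sminus j δ v0 k)) 0 := by
        rw [heat_mass hδ hRv]; exact hmv
      have hKu' := cutPaste_Reg hjδ hRu'
      have hKv' := cutPaste_Reg hjδ hRv'
      have hmKu' : j * δ < tailF (cutPaste j δ (Splus j δ u0 k)) 0 := by
        rw [cutPaste_tailF_zero hjδ hRu' hau' hmu']; exact hmu'
      have hmKv' : j * δ < tailF (cutPaste j δ (Splus j δ v0 k)) 0 := by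
        rw [cutPaste_tailF_zero hjδ hRv' hav' hmv']; exact hmv'
      refine ⟨⟨?_, ?_, ?_, ?_, ?_⟩, ?_, ?_, ?_, ?_, ?_, ?_, ?_⟩
      · rw [hSmu]; exact cutPaste_Reg hjδ hRhu
      · rw [hSmv]; exact cutPaste_Reg hjδ hRhv
      · rw [hSmu, cutPaste_tailF_zero hjδ hRhu rfl hmhu]; exact hmhu
      · rw [hSmv, cutPaste_tailF_zero hjδ hRhv rfl hmhv]; exact hmhv
      · rw [hSmu, hSmv]
        exact cutPaste_mono hjδ hRhu hRhv rfl rfl hmhu hmhv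
          (heat_mono hδ hRu hRv hUle)
      · rw [hSpu]; exact heat_Reg hδ hKu'
      · rw [hSpv]; exact heat_Reg hδ hKv'
      · rw [hSpu, heat_mass hδ hKu']; exact hmKu'
      · rw [hSpv, heat_mass hδ hKv']; exact hmKv'
      · rw [hSpu]; rfl
      · rw [hSpv]; rfl
      · rw [hSpu, hSpv]
        exact heat_mono hδ hKu' hKv'
          (cutPaste_mono hjδ hRu' hRv' hau' hav' hmu' hmv' hUle')
  intro k
  exact ⟨(key k).1.2.2.2.2, (key k).2.2.2.2.2.2.2⟩
end

section
/- Nesting of barriers under refinement of the time step: let j > 0, let u ∈ L^∞(ℝ₊,ℝ₊) ∩ L¹(ℝ₊,ℝ₊), let δ > 0 with jδ < F(0; u), and let δ' = δ/ℓ for a positive integer ℓ. Then for all k ∈ ℕ, S^{(δ,−)}_{kδ}(u) ≤ S^{(δ',−)}_{kδ}(u) ≤ S^{(δ',+)}_{kδ}(u) ≤ S^{(δ,+)}_{kδ}(u). -/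
open MeasureTheory Set Filter

open Topology

/-! ### Auxiliary development -/

noncomputable section

/-- The 1d Gaussian heat kernel. -/
def gk (t x : ℝ) : ℝ := (Real.sqrt (2 * Real.pi * t))⁻¹ * Real.exp (-x^2 / (2*t))

lemma Gneum_eq_gk (t r r' : ℝ) : Gneum t r r' = gk t (r - r') + gk t (r + r') := by
  unfold Gneum gk; ring

lemma gk_nonneg (t x : ℝ) : 0 ≤ gk t x := by
  unfold gk; positivity

lemma gk_cont (t : ℝ) : Continuous (gk t) := by
  unfold gk; fun_prop

lemma gk_eq (t : ℝ) : gk t = fun x => (Real.sqrt (2 * Real.pi * t))⁻¹ *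
    Real.exp (-(1/(2*t)) * x^2) := by
  funext x; unfold gk
  rw [show -x^2/(2*t) = -(1/(2*t)) * x^2 by ring]

lemma gk_integrable {t : ℝ} (ht : 0 < t) : Integrable (gk t) := by
  rw [gk_eq]
  exact (integrable_exp_neg_mul_sq (by positivity)).const_mul _

lemma gk_integral {t : ℝ} (ht : 0 < t) : ∫ x, gk t x = 1 := by
  rw [gk_eq]
  rw [MeasureTheory.integral_const_mul]
  rw [integral_gaussian]
  rw [show Real.pi / (1/(2*t)) = 2 * Real.pi * t by field_simp]
  exact inv_mul_cancel₀ (ne_of_gt (Real.sqrt_pos.2 (by positivity)))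

lemma gk_even (t x : ℝ) : gk t (-x) = gk t x := by
  unfold gk; rw [show (-x)^2 = x^2 by ring]

lemma gk_le {t : ℝ} (ht : 0 < t) (x : ℝ) : gk t x ≤ (Real.sqrt (2 * Real.pi * t))⁻¹ := by
  unfold gk
  have h1 : Real.exp (-x^2/(2*t)) ≤ 1 := by
    rw [Real.exp_le_one_iff]
    have hx : 0 ≤ x^2 := sq_nonneg x
    have h2t : (0:ℝ) < 2*t := by linarith
    rw [neg_div]
    simp only [neg_nonpos]
    positivity
  calc (Real.sqrt (2 * Real.pi * t))⁻¹ * Real.exp (-x^2/(2*t))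
      ≤ (Real.sqrt (2 * Real.pi * t))⁻¹ * 1 := by
        apply mul_le_mul_of_nonneg_left h1 (by positivity)
    _ = _ := mul_one _

lemma gk_anti {t : ℝ} (ht : 0 < t) {x y : ℝ} (h : |x| ≤ |y|) : gk t y ≤ gk t x := by
  have hxy : x^2 ≤ y^2 := by
    rw [← sq_abs x, ← sq_abs y]
    exact pow_le_pow_left₀ (abs_nonneg _) h 2
  unfold gk
  have h2t : (0:ℝ) < 2 * t := by linarith
  have : -y^2/(2*t) ≤ -x^2/(2*t) := (div_le_div_iff_of_pos_right h2t).2 (by linarith)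
  exact mul_le_mul_of_nonneg_left (Real.exp_le_exp.2 this) (by positivity)

end

noncomputable section

/-! ### Translation helpers for set integrals -/

lemma integral_Ioi_comp_sub (f : ℝ → ℝ) (c r : ℝ) :
    ∫ x in Ioi r, f (x - c) = ∫ x in Ioi (r - c), f x := by
  rw [← integral_indicator measurableSet_Ioi, ← integral_indicator measurableSet_Ioi]
  rw [← integral_add_right_eq_self ((Ioi (r - c)).indicator f) (-c)]
  congr 1; funext x
  have hiff : (x + -c) ∈ Ioi (r - c) ↔ x ∈ Ioi r := by
    simp only [mem_Ioi]; constructor <;> intro <;> linarith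
  by_cases h : x ∈ Ioi r
  · rw [indicator_of_mem h, indicator_of_mem (hiff.2 h)]
    norm_num [sub_eq_add_neg]
  · rw [indicator_of_notMem h, indicator_of_notMem (fun hc => h (hiff.1 hc))]

/-! ### Good densities and tail functions -/

/-- A good density: measurable, nonnegative, integrable on `ℝ₊`, bounded. -/
def Gd (f : ℝ → ℝ) : Prop :=
  Measurable f ∧ (∀ x, 0 ≤ f x) ∧ IntegrableOn f (Ioi (0:ℝ)) ∧ ∃ M, ∀ x, f x ≤ M

/-- The tail function of a density. -/
def tl (f : ℝ → ℝ) (r : ℝ) : ℝ := ∫ x in Ioi r, f x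

namespace Gd

variable {f : ℝ → ℝ} (hf : Gd f)
include hf

lemma meas : Measurable f := hf.1
lemma nonneg : ∀ x, 0 ≤ f x := hf.2.1
lemma int0 : IntegrableOn f (Ioi (0:ℝ)) := hf.2.2.1

lemma intOn_Ioc (a b : ℝ) : IntegrableOn f (Ioc a b) := by
  obtain ⟨M, hM⟩ := hf.2.2.2
  refine Integrable.mono' (g := fun _ => M) ?_ (hf.meas.aestronglyMeasurable) ?_
  · exact integrableOn_const (by rw [Real.volume_Ioc]; exact ENNReal.ofReal_ne_top)
  · filter_upwards with x
    rw [Real.norm_eq_abs, abs_of_nonneg (hf.nonneg x)]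
    exact hM x

lemma intOn (r : ℝ) : IntegrableOn f (Ioi r) := by
  rcases le_or_gt 0 r with h | h
  · exact hf.int0.mono_set (Ioi_subset_Ioi h)
  · rw [← Ioc_union_Ioi_eq_Ioi h.le]
    exact (hf.intOn_Ioc r 0).union hf.int0

lemma intervalInt (a b : ℝ) : IntervalIntegrable f volume a b := by
  rw [intervalIntegrable_iff]
  exact hf.intOn_Ioc _ _

lemma tl_nonneg (r : ℝ) : 0 ≤ tl f r :=
  setIntegral_nonneg measurableSet_Ioi (fun x _ => hf.nonneg x)

lemma tl_anti : Antitone (tl f) := by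
  intro a b hab
  exact setIntegral_mono_set (hf.intOn a) (Filter.Eventually.of_forall (fun x => hf.nonneg x))
    (Filter.Eventually.of_forall (fun x hx => Ioi_subset_Ioi hab hx))

lemma tl_split {a b : ℝ} (hab : a ≤ b) : tl f a = (∫ x in Ioc a b, f x) + tl f b := by
  unfold tl
  rw [← Ioc_union_Ioi_eq_Ioi hab,
    setIntegral_union (Ioc_disjoint_Ioi le_rfl) measurableSet_Ioi (hf.intOn_Ioc a b) (hf.intOn b)]

lemma tl_eq_sub (r : ℝ) : tl f r = tl f 0 - ∫ x in (0:ℝ)..r, f x := by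
  rcases le_or_gt 0 r with h | h
  · rw [intervalIntegral.integral_of_le h]
    have := hf.tl_split h
    linarith
  · rw [intervalIntegral.integral_symm, intervalIntegral.integral_of_le h.le]
    have := hf.tl_split h.le
    linarith

lemma tl_cont : Continuous (tl f) := by
  have h1 : Continuous fun r => ∫ x in (0:ℝ)..r, f x :=
    intervalIntegral.continuous_primitive (fun a b => hf.intervalInt a b) 0
  exact (continuous_const.sub h1).congr (fun r => (hf.tl_eq_sub r).symm)

end Gd

end

noncomputable section

namespace Gd

variable {f : ℝ → ℝ} (hf : Gd f)
include hf

lemma tl_tendsto : Tendsto (tl f) atTop (𝓝 0) := by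
  have h1 : Tendsto (fun r : ℝ => ∫ x in Ioc (0:ℝ) r, f x) atTop (𝓝 (tl f 0)) := by
    have := tendsto_setIntegral_of_monotone (f := f) (μ := volume) (s := fun r : ℝ => Ioc (0:ℝ) r)
      (fun i => measurableSet_Ioc) (fun a b hab => Ioc_subset_Ioc_right hab) ?_
    · rwa [iUnion_Ioc_right] at this
    · rw [iUnion_Ioc_right]; exact hf.int0
  have h2 : Tendsto (fun r : ℝ => tl f 0 - ∫ x in Ioc (0:ℝ) r, f x) atTop (𝓝 (tl f 0 - tl f 0)) :=
    tendsto_const_nhds.sub h1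
  rw [sub_self] at h2
  refine h2.congr' ?_
  filter_upwards [eventually_ge_atTop (0:ℝ)] with r hr
  have := hf.tl_split hr
  linarith

lemma tl_exists_level {a : ℝ} (ha : 0 < a) (hm : a < tl f 0) :
    ∃ R, 0 ≤ R ∧ tl f R = a ∧ R = sInf {r : ℝ | 0 ≤ r ∧ tl f r = a} ∧
      (∀ r, 0 ≤ r → r ≤ R → a ≤ tl f r) := by
  set S := {r : ℝ | 0 ≤ r ∧ tl f r = a} with hS
  have hS_closed : IsClosed S := by
    have : S = Ici 0 ∩ (tl f) ⁻¹' {a} := by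
      ext x; simp [hS, mem_Ici]
    rw [this]
    exact isClosed_Ici.inter (isClosed_singleton.preimage hf.tl_cont)
  obtain ⟨M, hM0, hMlt⟩ : ∃ M, 0 ≤ M ∧ tl f M < a := by
    have h := hf.tl_tendsto
    rw [Metric.tendsto_atTop] at h
    obtain ⟨N, hN⟩ := h a ha
    refine ⟨max N 0, le_max_right _ _, ?_⟩
    have := hN (max N 0) (le_max_left _ _)
    rw [Real.dist_eq, sub_zero] at this
    exact lt_of_abs_lt this
  have hSne : S.Nonempty := by
    have hc : ContinuousOn (tl f) (Icc 0 M) := hf.tl_cont.continuousOn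
    obtain ⟨r, hr, hra⟩ := intermediate_value_Icc' hM0 hc ⟨hMlt.le, hm.le⟩
    exact ⟨r, hr.1, hra⟩
  have hbdd : BddBelow S := ⟨0, fun x hx => hx.1⟩
  have hmem := hS_closed.csInf_mem hSne hbdd
  refine ⟨sInf S, hmem.1, hmem.2, rfl, ?_⟩
  intro r hr0 hrR
  by_contra hlt
  push_neg at hlt
  obtain ⟨r', hr', hra⟩ := intermediate_value_Icc' hr0 (hf.tl_cont.continuousOn) ⟨hlt.le, hm.le⟩
  have h1 : sInf S ≤ r' := csInf_le hbdd ⟨hr'.1, hra⟩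
  have h2 : r = sInf S := le_antisymm hrR (h1.trans hr'.2)
  rw [h2, hmem.2] at hlt
  exact lt_irrefl _ hlt

end Gd

lemma tailF_atomless (f : ℝ → ℝ) (r : ℝ) : tailF ((0:ℝ), f) r = tl f r := by
  unfold tailF tl
  simp

/-- Main structure lemma for the cut-and-paste operator applied to an atomless element. -/
lemma cutPaste_tail {f : ℝ → ℝ} {j b : ℝ} (hf : Gd f) (hjb : 0 < j * b) (hm : j * b < tl f 0) :
    Gd (cutPaste j b ((0:ℝ), f)).2 ∧ (cutPaste j b ((0:ℝ), f)).1 = j * b ∧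
    tailF (cutPaste j b ((0:ℝ), f)) 0 = tl f 0 ∧
    (∀ r, 0 < r → tailF (cutPaste j b ((0:ℝ), f)) r = max (tl f r - j * b) 0) := by
  obtain ⟨R, hR0, hRa, hRdef, hlev⟩ := hf.tl_exists_level hjb hm
  have hRd : Rdelta j b ((0:ℝ), f) = R := by
    rw [hRdef]
    unfold Rdelta
    congr 1
    ext r
    rw [mem_setOf_eq, mem_setOf_eq, tailF_atomless]
  have key : ∀ r, 0 ≤ r → (∫ x in Ioi r, (Icc 0 R).indicator f x) = ∫ x in Ioc r R, f x := by
    intro r hr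
    rw [setIntegral_indicator measurableSet_Icc]
    have hset : Ioi r ∩ Icc 0 R = Ioc r R := by
      ext x
      simp only [mem_inter_iff, mem_Ioi, mem_Icc, mem_Ioc]
      constructor
      · rintro ⟨h1, _, h3⟩; exact ⟨h1, h3⟩
      · rintro ⟨h1, h2⟩; exact ⟨h1, by linarith, h2⟩
    rw [hset]
  obtain ⟨M, hM⟩ := hf.2.2.2
  have hg : (cutPaste j b ((0:ℝ), f)).2 = (Icc 0 R).indicator f := by
    unfold cutPaste
    rw [hRd]
  have hc : (cutPaste j b ((0:ℝ), f)).1 = j * b := rfl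
  refine ⟨?_, rfl, ?_, ?_⟩
  · rw [hg]
    refine ⟨hf.meas.indicator measurableSet_Icc, fun x => indicator_nonneg (fun y _ => hf.nonneg y) x,
      (hf.int0.indicator measurableSet_Icc :), ⟨max M 0, fun x => ?_⟩⟩
    by_cases hx : x ∈ Icc 0 R
    · rw [indicator_of_mem hx]; exact le_max_of_le_left (hM x)
    · rw [indicator_of_notMem hx]; exact le_max_right _ _
  · -- mass conservation at r = 0
    unfold tailF
    rw [hg, hc, if_pos rfl]
    rw [key 0 le_rfl]
    have := hf.tl_split hR0
    unfold tl at this hRa ⊢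
    linarith
  · intro r hrpos
    unfold tailF
    rw [hg, if_neg (ne_of_gt hrpos), key r hrpos.le, zero_add]
    rcases le_or_gt r R with h | h
    · have h1 := hf.tl_split h
      have h2 : j * b ≤ tl f r := hlev r hrpos.le h
      rw [max_eq_left (by linarith)]
      unfold tl at h1 hRa ⊢
      linarith
    · rw [Ioc_eq_empty (not_lt.2 h.le), Measure.restrict_empty, integral_zero_measure]
      have h2 : tl f r ≤ j * b := by
        rw [← hRa]; exact hf.tl_anti h.le
      rw [max_eq_right (by linarith)]

end

noncomputable section

lemma gk_gd {t : ℝ} (ht : 0 < t) : Gd (gk t) :=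
  ⟨(gk_cont t).measurable, gk_nonneg t, (gk_integrable ht).integrableOn, ⟨_, gk_le ht⟩⟩

/-- Gaussian tail. -/
def Hg (t a : ℝ) : ℝ := tl (gk t) a

lemma Hg_nonneg {t : ℝ} (ht : 0 < t) (a : ℝ) : 0 ≤ Hg t a := (gk_gd ht).tl_nonneg a

lemma Hg_anti {t : ℝ} (ht : 0 < t) {a b : ℝ} (h : a ≤ b) : Hg t b ≤ Hg t a :=
  (gk_gd ht).tl_anti h

lemma Hg_cont {t : ℝ} (ht : 0 < t) : Continuous (Hg t) := (gk_gd ht).tl_cont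

lemma Hg_add_neg {t : ℝ} (ht : 0 < t) (a : ℝ) : Hg t a + Hg t (-a) = 1 := by
  have h1 : Hg t (-a) = ∫ x in Iic a, gk t x := by
    have h := integral_comp_neg_Ioi (-a) (gk t)
    rw [neg_neg] at h
    rw [← h]
    exact setIntegral_congr_fun measurableSet_Ioi (fun x _ => (gk_even t x).symm)
  rw [h1, add_comm]
  unfold Hg tl
  rw [intervalIntegral.integral_Iic_add_Ioi ((gk_integrable ht).integrableOn) ((gk_integrable ht).integrableOn)]
  exact gk_integral ht

lemma Hg_le_one {t : ℝ} (ht : 0 < t) (a : ℝ) : Hg t a ≤ 1 := by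
  have := Hg_add_neg ht a
  have := Hg_nonneg ht (-a)
  linarith

/-- The kernel tail `K̄(r, x) = ∫_{Ioi r} Gneum t y x dy`. -/
def Kb (t r x : ℝ) : ℝ := Hg t (r - x) + Hg t (r + x)

/-- `∂_x K̄(r,x)`. -/
def wfn (t r s : ℝ) : ℝ := gk t (r - s) - gk t (r + s)

lemma gk_int_sub {t : ℝ} (ht : 0 < t) (r : ℝ) : Integrable (fun s => gk t (s - r)) :=
  (gk_integrable ht).comp_sub_right r

lemma gk_int_sub' {t : ℝ} (ht : 0 < t) (r : ℝ) : Integrable (fun s => gk t (r - s)) :=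
  (integrable_comp_sub_left (gk t) r).2 (gk_integrable ht)

lemma gk_int_add {t : ℝ} (ht : 0 < t) (r : ℝ) : Integrable (fun s => gk t (s + r)) := by
  have := (gk_integrable ht).comp_sub_right (-r)
  simpa [sub_neg_eq_add] using this

lemma gk_int_add' {t : ℝ} (ht : 0 < t) (r : ℝ) : Integrable (fun s => gk t (r + s)) := by
  have := gk_int_add ht r
  refine this.congr ?_
  filter_upwards with s
  rw [add_comm]

lemma Kb_eq_int {t : ℝ} (ht : 0 < t) (r x : ℝ) : (∫ y in Ioi r, Gneum t y x) = Kb t r x := by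
  have h1 : (∫ y in Ioi r, Gneum t y x) =
      (∫ y in Ioi r, gk t (y - x)) + ∫ y in Ioi r, gk t (y + x) := by
    rw [← integral_add ((gk_int_sub ht x).integrableOn) ((gk_int_add ht x).integrableOn)]
    exact setIntegral_congr_fun measurableSet_Ioi (fun y _ => Gneum_eq_gk t y x)
  rw [h1, integral_Ioi_comp_sub (gk t) x r]
  have h2 : ∫ y in Ioi r, gk t (y + x) = ∫ y in Ioi r, gk t (y - (-x)) := by
    simp [sub_neg_eq_add]
  rw [h2, integral_Ioi_comp_sub (gk t) (-x) r, sub_neg_eq_add]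
  rfl

lemma Kb_nonneg {t : ℝ} (ht : 0 < t) (r x : ℝ) : 0 ≤ Kb t r x :=
  add_nonneg (Hg_nonneg ht _) (Hg_nonneg ht _)

lemma Kb_le_one {t : ℝ} (ht : 0 < t) {r : ℝ} (hr : 0 ≤ r) (x : ℝ) : Kb t r x ≤ 1 := by
  have h1 : Hg t (r + x) ≤ Hg t (-(r - x)) := Hg_anti ht (by linarith [neg_sub r x])
  have h2 := Hg_add_neg ht (r - x)
  unfold Kb
  linarith

lemma Kb_zero_left {t : ℝ} (ht : 0 < t) (x : ℝ) : Kb t 0 x = 1 := by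
  unfold Kb
  rw [zero_sub, zero_add, add_comm]
  exact Hg_add_neg ht x

lemma Kb_right_zero (t r : ℝ) : Kb t r 0 = 2 * Hg t r := by
  unfold Kb
  rw [sub_zero, add_zero]
  ring

lemma Kb_cont_right {t : ℝ} (ht : 0 < t) (r : ℝ) : Continuous (fun x => Kb t r x) := by
  unfold Kb
  exact ((Hg_cont ht).comp (continuous_const.sub continuous_id)).add
    ((Hg_cont ht).comp (continuous_const.add continuous_id))

lemma wfn_nonneg {t : ℝ} (ht : 0 < t) {r s : ℝ} (hr : 0 ≤ r) (hs : 0 ≤ s) : 0 ≤ wfn t r s := by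
  unfold wfn
  rw [sub_nonneg]
  apply gk_anti ht
  rw [abs_of_nonneg (by linarith : (0:ℝ) ≤ r + s)]
  rcases abs_cases (r - s) with ⟨h, _⟩ | ⟨h, _⟩ <;> linarith

lemma wfn_cont {t : ℝ} (r : ℝ) : Continuous (fun s => wfn t r s) := by
  unfold wfn
  exact ((gk_cont t).comp (continuous_const.sub continuous_id)).sub
    ((gk_cont t).comp (continuous_const.add continuous_id))

lemma wfn_int {t : ℝ} (ht : 0 < t) (r : ℝ) : Integrable (fun s => wfn t r s) :=
  (gk_int_sub' ht r).sub (gk_int_add' ht r)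

/-- (C): `∫_{(0,x]} gk(r-s) ds = Hg(r-x) - Hg(r)`. -/
lemma gk_Ioc_sub {t : ℝ} (ht : 0 < t) (r : ℝ) {x : ℝ} (hx : 0 ≤ x) :
    ∫ s in Ioc 0 x, gk t (r - s) = Hg t (r - x) - Hg t r := by
  have he : ∀ s : ℝ, gk t (r - s) = gk t (s - r) := by
    intro s
    rw [← gk_even t (s - r), neg_sub]
  simp_rw [he]
  rw [show (∫ s in Ioc 0 x, gk t (s - r)) = ∫ s in (0:ℝ)..x, gk t (s - r) from
    (intervalIntegral.integral_of_le hx).symm]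
  rw [intervalIntegral.integral_comp_sub_right (gk t) r]
  rw [intervalIntegral.integral_of_le (by linarith : 0 - r ≤ x - r)]
  have hsplit := (gk_gd ht).tl_split (by linarith : 0 - r ≤ x - r)
  have e1 : tl (gk t) (0 - r) = Hg t (-r) := by rw [zero_sub]; rfl
  have h1 := Hg_add_neg ht r
  have h2 := Hg_add_neg ht (r - x)
  have e2 : tl (gk t) (x - r) = Hg t (-(r - x)) := by rw [neg_sub]; rfl
  rw [e1, e2] at hsplit
  linarith

/-- (D): `∫_{(0,x]} gk(r+s) ds = Hg(r) - Hg(r+x)`. -/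
lemma gk_Ioc_add {t : ℝ} (ht : 0 < t) (r : ℝ) {x : ℝ} (hx : 0 ≤ x) :
    ∫ s in Ioc 0 x, gk t (r + s) = Hg t r - Hg t (r + x) := by
  have he : ∀ s : ℝ, gk t (r + s) = gk t (s - (-r)) := by
    intro s
    rw [sub_neg_eq_add, add_comm]
  simp_rw [he]
  rw [show (∫ s in Ioc 0 x, gk t (s - (-r))) = ∫ s in (0:ℝ)..x, gk t (s - (-r)) from
    (intervalIntegral.integral_of_le hx).symm]
  rw [intervalIntegral.integral_comp_sub_right (gk t) (-r)]
  rw [intervalIntegral.integral_of_le (by linarith : 0 - -r ≤ x - -r)]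
  have hsplit := (gk_gd ht).tl_split (by linarith : 0 - -r ≤ x - -r)
  have e1 : tl (gk t) (0 - -r) = Hg t r := by rw [zero_sub, neg_neg]; rfl
  have e2 : tl (gk t) (x - -r) = Hg t (r + x) := by rw [sub_neg_eq_add, add_comm]; rfl
  rw [e1, e2] at hsplit
  linarith

/-- (A)+(B): total mass of `wfn` on `ℝ₊`. -/
lemma wfn_total {t : ℝ} (ht : 0 < t) {r : ℝ} (hr : 0 ≤ r) :
    Kb t r 0 + ∫ s in Ioi 0, wfn t r s = 1 := by
  have hA : ∫ s in Ioi 0, gk t (r - s) = Hg t (-r) := by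
    have he : ∀ s : ℝ, gk t (r - s) = gk t (s - r) := fun s => by
      rw [← gk_even t (s - r), neg_sub]
    simp_rw [he]
    rw [integral_Ioi_comp_sub (gk t) r 0, zero_sub]
    rfl
  have hB : ∫ s in Ioi 0, gk t (r + s) = Hg t r := by
    have he : ∀ s : ℝ, gk t (r + s) = gk t (s - (-r)) := fun s => by
      rw [sub_neg_eq_add, add_comm]
    simp_rw [he]
    rw [integral_Ioi_comp_sub (gk t) (-r) 0, zero_sub, neg_neg]
    rfl
  have hsub : ∫ s in Ioi 0, wfn t r s =
      (∫ s in Ioi 0, gk t (r - s)) - ∫ s in Ioi 0, gk t (r + s) := by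
    unfold wfn
    exact integral_sub ((gk_int_sub' ht r).integrableOn) ((gk_int_add' ht r).integrableOn)
  have h1 := Hg_add_neg ht r
  rw [hsub, hA, hB, Kb_right_zero]
  linarith

/-- FTC-free formula: `K̄(r,x) = K̄(r,0) + ∫_{(0,x]} wfn`. -/
lemma Kb_eq_wfn {t : ℝ} (ht : 0 < t) (r : ℝ) {x : ℝ} (hx : 0 ≤ x) :
    Kb t r x = Kb t r 0 + ∫ s in Ioc 0 x, wfn t r s := by
  have hsub : ∫ s in Ioc 0 x, wfn t r s =
      (∫ s in Ioc 0 x, gk t (r - s)) - ∫ s in Ioc 0 x, gk t (r + s) := by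
    unfold wfn
    exact integral_sub ((gk_int_sub' ht r).integrableOn) ((gk_int_add' ht r).integrableOn)
  rw [hsub, gk_Ioc_sub ht r hx, gk_Ioc_add ht r hx, Kb_right_zero]
  unfold Kb
  ring

end

noncomputable section

lemma sqrt_inv_mul (A B : ℝ) (hA : 0 ≤ A) :
    (Real.sqrt A)⁻¹ * (Real.sqrt B)⁻¹ = (Real.sqrt (A * B))⁻¹ := by
  rw [← mul_inv, Real.sqrt_mul hA]

lemma gk_mul {s t : ℝ} (hs : 0 < s) (ht : 0 < t) (a y : ℝ) :
    gk s (a - y) * gk t y = gk (s + t) a * gk (s * t / (s + t)) (y - t * a / (s + t)) := by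
  have hst : (0:ℝ) < s + t := by linarith
  have hC : (Real.sqrt (2 * Real.pi * s))⁻¹ * (Real.sqrt (2 * Real.pi * t))⁻¹ =
      (Real.sqrt (2 * Real.pi * (s + t)))⁻¹ *
        (Real.sqrt (2 * Real.pi * (s * t / (s + t))))⁻¹ := by
    rw [sqrt_inv_mul _ _ (by positivity), sqrt_inv_mul _ _ (by positivity)]
    congr 2
    field_simp
  have hE : Real.exp (-(a - y)^2 / (2 * s)) * Real.exp (-y^2 / (2 * t)) =
      Real.exp (-a^2 / (2 * (s + t))) *
        Real.exp (-(y - t * a / (s + t))^2 / (2 * (s * t / (s + t)))) := by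
    rw [← Real.exp_add, ← Real.exp_add]
    congr 1
    field_simp
    ring
  unfold gk
  rw [mul_mul_mul_comm, hC, hE]
  ring

lemma gk_conv {s t : ℝ} (hs : 0 < s) (ht : 0 < t) (a : ℝ) :
    ∫ y, gk s (a - y) * gk t y = gk (s + t) a := by
  have hτ : 0 < s * t / (s + t) := by positivity
  simp_rw [gk_mul hs ht a]
  rw [MeasureTheory.integral_const_mul]
  rw [integral_sub_right_eq_self (gk (s * t / (s + t))) (t * a / (s + t))]
  rw [gk_integral hτ, mul_one]

lemma int_Ioi_even {f : ℝ → ℝ} (hf : Integrable f) (he : ∀ y, f (-y) = f y) :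
    ∫ y in Ioi 0, f y = (1/2) * ∫ y, f y := by
  have h1 : ∫ y in Iic (0:ℝ), f y = ∫ y in Ioi (0:ℝ), f y := by
    have h := integral_comp_neg_Ioi (0:ℝ) f
    rw [neg_zero] at h
    rw [← h]
    exact setIntegral_congr_fun measurableSet_Ioi (fun y _ => he y)
  have h2 := intervalIntegral.integral_Iic_add_Ioi (b := (0:ℝ))
    hf.integrableOn hf.integrableOn
  rw [h1] at h2
  linarith

lemma Gneum_CK {s t : ℝ} (hs : 0 < s) (ht : 0 < t) (x z : ℝ) :
    ∫ y in Ioi 0, Gneum s x y * Gneum t y z = Gneum (s + t) x z := by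
  have bdd : ∀ (c : ℝ) (g : ℝ → ℝ), Integrable g →
      Integrable (fun y => gk s (c - y) * g y) := fun c g hg =>
    Integrable.bdd_mul (c := (Real.sqrt (2 * Real.pi * s))⁻¹) hg
      ((gk_cont s).comp (continuous_const.sub continuous_id)).aestronglyMeasurable
      (Filter.Eventually.of_forall fun y => by
        rw [Real.norm_eq_abs, abs_of_nonneg (gk_nonneg _ _)]; exact gk_le hs _)
  have i1 : Integrable (fun y => gk s (x - y) * gk t (y - z)) :=
    bdd x _ (gk_int_sub ht z)
  have i2 : Integrable (fun y => gk s (x - y) * gk t (y + z)) :=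
    bdd x _ (gk_int_add ht z)
  have i3 : Integrable (fun y => gk s (x + y) * gk t (y - z)) := by
    refine i2.comp_neg.congr (Filter.Eventually.of_forall fun y => ?_)
    show gk s (x - -y) * gk t (-y + z) = gk s (x + y) * gk t (y - z)
    rw [show x - -y = x + y by ring, show -y + z = -(y - z) by ring, gk_even]
  have i4 : Integrable (fun y => gk s (x + y) * gk t (y + z)) := by
    refine i1.comp_neg.congr (Filter.Eventually.of_forall fun y => ?_)
    show gk s (x - -y) * gk t (-y - z) = gk s (x + y) * gk t (y + z)
    rw [show x - -y = x + y by ring, show -y - z = -(y + z) by ring, gk_even]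
  have e1 : ∫ y, gk s (x - y) * gk t (y - z) = gk (s + t) (x - z) := by
    rw [← integral_add_right_eq_self (fun y => gk s (x - y) * gk t (y - z)) z]
    have : ∀ y : ℝ, gk s (x - (y + z)) * gk t (y + z - z) = gk s ((x - z) - y) * gk t y := by
      intro y
      rw [show x - (y + z) = (x - z) - y by ring, show y + z - z = y by ring]
    simp_rw [this]
    exact gk_conv hs ht (x - z)
  have e2 : ∫ y, gk s (x - y) * gk t (y + z) = gk (s + t) (x + z) := by
    rw [← integral_sub_right_eq_self (fun y => gk s (x - y) * gk t (y + z)) z]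
    have : ∀ y : ℝ, gk s (x - (y - z)) * gk t (y - z + z) = gk s ((x + z) - y) * gk t y := by
      intro y
      rw [show x - (y - z) = (x + z) - y by ring, show y - z + z = y by ring]
    simp_rw [this]
    exact gk_conv hs ht (x + z)
  have e3 : ∫ y, gk s (x + y) * gk t (y - z) = gk (s + t) (x + z) := by
    rw [← integral_neg_eq_self (fun y => gk s (x + y) * gk t (y - z)) volume]
    have : ∀ y : ℝ, gk s (x + -y) * gk t (-y - z) = gk s (x - y) * gk t (y + z) := by
      intro y
      rw [show x + -y = x - y by ring, show -y - z = -(y + z) by ring, gk_even]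
    simp_rw [this]
    exact e2
  have e4 : ∫ y, gk s (x + y) * gk t (y + z) = gk (s + t) (x - z) := by
    rw [← integral_neg_eq_self (fun y => gk s (x + y) * gk t (y + z)) volume]
    have : ∀ y : ℝ, gk s (x + -y) * gk t (-y + z) = gk s (x - y) * gk t (y - z) := by
      intro y
      rw [show x + -y = x - y by ring, show -y + z = -(y - z) by ring, gk_even]
    simp_rw [this]
    exact e1
  have hexp : ∀ y : ℝ, Gneum s x y * Gneum t y z =
      (gk s (x - y) * gk t (y - z) + gk s (x - y) * gk t (y + z)) +
      (gk s (x + y) * gk t (y - z) + gk s (x + y) * gk t (y + z)) := by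
    intro y
    rw [Gneum_eq_gk, Gneum_eq_gk]
    ring
  have hint : Integrable (fun y => Gneum s x y * Gneum t y z) := by
    refine ((i1.add i2).add (i3.add i4)).congr (Filter.Eventually.of_forall fun y => ?_)
    exact (hexp y).symm
  have heven : ∀ y, Gneum s x (-y) * Gneum t (-y) z = Gneum s x y * Gneum t y z := by
    intro y
    rw [Gneum_eq_gk, Gneum_eq_gk, Gneum_eq_gk, Gneum_eq_gk]
    rw [show x - -y = x + y by ring, show x + -y = x - y by ring,
      show -y - z = -(y + z) by ring, show -y + z = -(y - z) by ring, gk_even, gk_even]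
    ring
  rw [int_Ioi_even hint heven]
  have : ∫ y, Gneum s x y * Gneum t y z =
      ((∫ y, gk s (x - y) * gk t (y - z)) + ∫ y, gk s (x - y) * gk t (y + z)) +
      ((∫ y, gk s (x + y) * gk t (y - z)) + ∫ y, gk s (x + y) * gk t (y + z)) := by
    have i12 : Integrable (fun y => gk s (x - y) * gk t (y - z) + gk s (x - y) * gk t (y + z)) :=
      i1.add i2
    have i34 : Integrable (fun y => gk s (x + y) * gk t (y - z) + gk s (x + y) * gk t (y + z)) :=
      i3.add i4
    rw [← integral_add i1 i2, ← integral_add i3 i4, ← integral_add i12 i34]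
    exact integral_congr_ae (Filter.Eventually.of_forall fun y => hexp y)
  rw [this, e1, e2, e3, e4, Gneum_eq_gk]
  ring

end

noncomputable section

lemma Gneum_nonneg (t x y : ℝ) : 0 ≤ Gneum t x y := by
  rw [Gneum_eq_gk]
  exact add_nonneg (gk_nonneg _ _) (gk_nonneg _ _)

lemma Gneum_int {t : ℝ} (ht : 0 < t) (y : ℝ) : Integrable (fun x => Gneum t x y) := by
  refine ((gk_int_sub ht y).add (gk_int_add ht y)).congr (Filter.Eventually.of_forall fun x => ?_)
  exact (Gneum_eq_gk t x y).symm

lemma Gneum_cont (t : ℝ) : Continuous (fun p : ℝ × ℝ => Gneum t p.1 p.2) := by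
  unfold Gneum
  fun_prop

lemma Gneum_contl (t y : ℝ) : Continuous fun x => Gneum t x y := by
  unfold Gneum
  fun_prop

lemma Gneum_contr (t x : ℝ) : Continuous fun y => Gneum t x y := by
  unfold Gneum
  fun_prop

lemma Gneum_le {t : ℝ} (ht : 0 < t) (x y : ℝ) :
    Gneum t x y ≤ 2 * (Real.sqrt (2 * Real.pi * t))⁻¹ := by
  rw [Gneum_eq_gk]
  have := gk_le ht (x - y)
  have := gk_le ht (x + y)
  linarith

/-- Niceness of an element of `𝓤`. -/
def NiceC (U : UEl) : Prop := 0 ≤ U.1 ∧ Gd U.2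

lemma prodInt {t : ℝ} (ht : 0 < t) {ρ : ℝ → ℝ} (hρ : Gd ρ) {r : ℝ} (hr : 0 ≤ r) :
    Integrable (fun p : ℝ × ℝ => Gneum t p.1 p.2 * ρ p.2)
      ((volume.restrict (Ioi r)).prod (volume.restrict (Ioi 0))) := by
  have hmeas : AEStronglyMeasurable (fun p : ℝ × ℝ => Gneum t p.1 p.2 * ρ p.2)
      ((volume.restrict (Ioi r)).prod (volume.restrict (Ioi 0))) :=
    ((Gneum_cont t).aestronglyMeasurable).mul
      ((hρ.meas.comp measurable_snd).aestronglyMeasurable)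
  rw [integrable_prod_iff' hmeas]
  constructor
  · filter_upwards with y
    exact ((Gneum_int ht y).integrableOn).mul_const _
  · have key : (fun y => ∫ x in Ioi r, ‖Gneum t x y * ρ y‖) =ᵐ[volume.restrict (Ioi 0)]
        (fun y => Kb t r y * ρ y) := by
      filter_upwards with y
      have h1 : ∀ x, ‖Gneum t x y * ρ y‖ = Gneum t x y * ρ y := fun x => by
        rw [Real.norm_eq_abs, abs_of_nonneg (mul_nonneg (Gneum_nonneg t x y) (hρ.nonneg y))]
      simp_rw [h1]
      rw [integral_mul_const, Kb_eq_int ht r y]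
    refine Integrable.congr ?_ key.symm
    refine Integrable.bdd_mul (c := 1) hρ.int0 ((Kb_cont_right ht r).aestronglyMeasurable) ?_
    filter_upwards with y
    rw [Real.norm_eq_abs, abs_of_nonneg (Kb_nonneg ht r y)]
    exact Kb_le_one ht hr y

lemma heat_tail {t : ℝ} (ht : 0 < t) {U : UEl} (hU : NiceC U) {r : ℝ} (hr : 0 ≤ r) :
    tailF (heat t U) r = U.1 * Kb t r 0 + ∫ y in Ioi 0, Kb t r y * U.2 y := by
  have hprod := prodInt ht hU.2 hr
  have h0 : tailF (heat t U) r =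
      ∫ x in Ioi r, (U.1 * Gneum t x 0 + ∫ y in Ioi 0, Gneum t x y * U.2 y) := by
    unfold tailF heat
    simp
  rw [h0]
  have hint1 : IntegrableOn (fun x => U.1 * Gneum t x 0) (Ioi r) :=
    ((Gneum_int ht 0).const_mul _).integrableOn
  have hint2 : IntegrableOn (fun x => ∫ y in Ioi 0, Gneum t x y * U.2 y) (Ioi r) :=
    hprod.integral_prod_left
  rw [integral_add hint1 hint2]
  congr 1
  · rw [integral_const_mul, Kb_eq_int ht r 0]
  · have hswap := integral_integral_swap (f := fun x y => Gneum t x y * U.2 y) hprod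
    rw [hswap]
    refine setIntegral_congr_fun measurableSet_Ioi (fun y _ => ?_)
    rw [integral_mul_const, Kb_eq_int ht r y]

set_option maxHeartbeats 1000000 in
lemma heat_nice {t : ℝ} (ht : 0 < t) {U : UEl} (hU : NiceC U) :
    NiceC (heat t U) ∧ (heat t U).1 = 0 := by
  obtain ⟨M, hM⟩ := hU.2.2.2.2
  have hdens : (heat t U).2 = fun x => U.1 * Gneum t x 0 + ∫ y in Ioi 0, Gneum t x y * U.2 y :=
    rfl
  refine ⟨⟨le_rfl, ?_, ?_, ?_, ?_⟩, rfl⟩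
  · -- measurable
    rw [hdens]
    apply Measurable.add
    · exact (continuous_const.mul (Gneum_contl t 0)).measurable
    · have hm : Measurable (fun p : ℝ × ℝ => Gneum t p.1 p.2 * U.2 p.2) :=
        (Gneum_cont t).measurable.mul (hU.2.meas.comp measurable_snd)
      exact (StronglyMeasurable.integral_prod_right'
        (f := fun p : ℝ × ℝ => Gneum t p.1 p.2 * U.2 p.2)
        (ν := volume.restrict (Ioi 0)) hm.stronglyMeasurable).measurable
  · -- nonneg
    intro x
    rw [hdens]
    refine add_nonneg (mul_nonneg hU.1 (Gneum_nonneg _ _ _)) ?_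
    exact integral_nonneg fun y => mul_nonneg (Gneum_nonneg _ _ _) (hU.2.nonneg y)
  · -- integrable on Ioi 0
    rw [hdens]
    apply Integrable.add
    · exact ((Gneum_int ht 0).const_mul _).integrableOn
    · exact (prodInt ht hU.2 le_rfl).integral_prod_left
  · -- bounded
    refine ⟨U.1 * (2 * (Real.sqrt (2 * Real.pi * t))⁻¹) +
      (2 * (Real.sqrt (2 * Real.pi * t))⁻¹) * ∫ y in Ioi 0, U.2 y, fun x => ?_⟩
    rw [hdens]
    have h1 : U.1 * Gneum t x 0 ≤ U.1 * (2 * (Real.sqrt (2 * Real.pi * t))⁻¹) :=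
      mul_le_mul_of_nonneg_left (Gneum_le ht x 0) hU.1
    have h2 : (∫ y in Ioi 0, Gneum t x y * U.2 y) ≤
        ∫ y in Ioi 0, (2 * (Real.sqrt (2 * Real.pi * t))⁻¹) * U.2 y := by
      refine setIntegral_mono_on ?_ ?_ measurableSet_Ioi (fun y _ => ?_)
      · -- integrability of LHS in y
        refine Integrable.bdd_mul (c := 2 * (Real.sqrt (2 * Real.pi * t))⁻¹) hU.2.int0
          ((Gneum_contr t x).aestronglyMeasurable) ?_
        filter_upwards with y
        rw [Real.norm_eq_abs, abs_of_nonneg (Gneum_nonneg t x y)]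
        exact Gneum_le ht x y
      · exact hU.2.int0.const_mul _
      · exact mul_le_mul_of_nonneg_right (Gneum_le ht x y) (hU.2.nonneg y)
    rw [integral_const_mul] at h2
    linarith

lemma heat_mass {t : ℝ} (ht : 0 < t) {U : UEl} (hU : NiceC U) :
    tailF (heat t U) 0 = tailF U 0 := by
  rw [heat_tail ht hU le_rfl, Kb_zero_left ht]
  have : (∫ y in Ioi 0, Kb t 0 y * U.2 y) = ∫ y in Ioi 0, U.2 y := by
    refine setIntegral_congr_fun measurableSet_Ioi (fun y _ => ?_)
    rw [Kb_zero_left ht, one_mul]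
  rw [this]
  unfold tailF
  rw [if_pos rfl, mul_one]

end

noncomputable section

lemma prim_cont {t : ℝ} (ht : 0 < t) (r : ℝ) :
    Continuous (fun y => ∫ s in (0:ℝ)..y, wfn t r s) :=
  intervalIntegral.continuous_primitive (fun _ _ => (wfn_int ht r).intervalIntegrable) 0

lemma prim_aesm {t : ℝ} (ht : 0 < t) (r : ℝ) :
    AEStronglyMeasurable (fun y => ∫ s in Ioc (0:ℝ) y, wfn t r s)
      (volume.restrict (Ioi (0:ℝ))) := by
  refine (prim_cont ht r).aestronglyMeasurable.congr ?_
  filter_upwards [ae_restrict_mem measurableSet_Ioi] with y hy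
  exact intervalIntegral.integral_of_le (le_of_lt hy)

lemma prim_bound {t : ℝ} (ht : 0 < t) {r : ℝ} (hr : 0 ≤ r) (y : ℝ) :
    0 ≤ (∫ s in Ioc (0:ℝ) y, wfn t r s) ∧
    (∫ s in Ioc (0:ℝ) y, wfn t r s) ≤ ∫ s in Ioi (0:ℝ), wfn t r s := by
  constructor
  · exact setIntegral_nonneg measurableSet_Ioc (fun s hs => wfn_nonneg ht hr hs.1.le)
  · refine setIntegral_mono_set ((wfn_int ht r).integrableOn) ?_ ?_
    · filter_upwards [ae_restrict_mem measurableSet_Ioi] with s hs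
      exact wfn_nonneg ht hr (le_of_lt hs)
    · exact Filter.Eventually.of_forall (fun s hs => hs.1)

lemma gInt {t r : ℝ} (ht : 0 < t) (hr : 0 ≤ r) {ρ : ℝ → ℝ} (hρ : Gd ρ) :
    Integrable (fun y => (∫ s in Ioc 0 y, wfn t r s) * ρ y) (volume.restrict (Ioi 0)) := by
  refine Integrable.bdd_mul (c := ∫ s in Ioi 0, wfn t r s) hρ.int0 (prim_aesm ht r) ?_
  filter_upwards with y
  rw [Real.norm_eq_abs, abs_of_nonneg (prim_bound ht hr y).1]
  exact (prim_bound ht hr y).2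

lemma tailF_nonneg {U : UEl} (hU : NiceC U) (r : ℝ) : 0 ≤ tailF U r := by
  unfold tailF
  split_ifs
  · exact add_nonneg hU.1 (hU.2.tl_nonneg r)
  · rw [zero_add]; exact hU.2.tl_nonneg r

lemma tailF_pos_eq {U : UEl} {s : ℝ} (hs : s ≠ 0) : tailF U s = tl U.2 s := by
  unfold tailF
  rw [if_neg hs, zero_add]
  rfl

lemma tailF_zero_eq {U : UEl} : tailF U 0 = U.1 + tl U.2 0 := by
  unfold tailF
  rw [if_pos rfl]
  rfl

lemma tailF_aesm {U : UEl} (hU : NiceC U) :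
    AEStronglyMeasurable (fun s => tailF U s) (volume.restrict (Ioi (0:ℝ))) := by
  refine hU.2.tl_cont.aestronglyMeasurable.congr ?_
  filter_upwards [ae_restrict_mem measurableSet_Ioi] with s hs
  exact (tailF_pos_eq (ne_of_gt hs)).symm

lemma tailF_bdd {U : UEl} (hU : NiceC U) {s : ℝ} (hs : 0 < s) :
    tailF U s ≤ tailF U 0 := by
  rw [tailF_pos_eq (ne_of_gt hs), tailF_zero_eq]
  have := hU.2.tl_anti (le_of_lt hs)
  linarith [hU.1]

lemma wfn_mul_tailF_int {t r : ℝ} (ht : 0 < t) {U : UEl} (hU : NiceC U) :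
    Integrable (fun s => wfn t r s * tailF U s) (volume.restrict (Ioi 0)) := by
  have h := Integrable.bdd_mul (c := tailF U 0) ((wfn_int ht r).integrableOn)
    (tailF_aesm hU) ?_
  · refine h.congr (Filter.Eventually.of_forall fun s => mul_comm _ _)
  · filter_upwards [ae_restrict_mem measurableSet_Ioi] with s hs
    rw [Real.norm_eq_abs, abs_of_nonneg (tailF_nonneg hU s)]
    exact tailF_bdd hU hs

/-- The key representation of the tail of the heat evolution as a positive combination
of the tails of the initial condition. -/
lemma heat_rep {t : ℝ} (ht : 0 < t) {U : UEl} (hU : NiceC U) {r : ℝ} (hr : 0 ≤ r) :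
    tailF (heat t U) r = tailF U 0 * Kb t r 0 + ∫ s in Ioi 0, wfn t r s * tailF U s := by
  have hρ : Gd U.2 := hU.2
  rw [heat_tail ht hU hr]
  -- (b)(c): expand the kernel inside the integral
  have hbc : (∫ y in Ioi 0, Kb t r y * U.2 y) =
      Kb t r 0 * (∫ y in Ioi 0, U.2 y) +
        ∫ y in Ioi 0, (∫ s in Ioc 0 y, wfn t r s) * U.2 y := by
    rw [← MeasureTheory.integral_const_mul, ← integral_add (hρ.int0.const_mul _) (gInt ht hr hρ)]
    refine setIntegral_congr_fun measurableSet_Ioi fun y hy => ?_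
    rw [Kb_eq_wfn ht r (le_of_lt hy), add_mul]
  -- (d): Fubini
  have hd : (∫ y in Ioi 0, (∫ s in Ioc 0 y, wfn t r s) * U.2 y) =
      ∫ s in Ioi 0, wfn t r s * tl U.2 s := by
    set Q : ℝ × ℝ → ℝ := ({p : ℝ × ℝ | p.2 ≤ p.1}).indicator
      (fun p => wfn t r p.2 * U.2 p.1) with hQdef
    have hQmeas : Measurable Q := by
      apply Measurable.indicator
      · exact ((wfn_cont r).measurable.comp measurable_snd).mul (hρ.meas.comp measurable_fst)
      · exact measurableSet_le measurable_snd measurable_fst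
    have hslice1 : ∀ y : ℝ, (fun s => Q (y, s)) =
        (Iic y).indicator (fun s => wfn t r s * U.2 y) := by
      intro y; funext s
      by_cases h : s ≤ y
      · rw [hQdef, indicator_of_mem (show (y, s) ∈ {p : ℝ × ℝ | p.2 ≤ p.1} from h),
          indicator_of_mem (show s ∈ Iic y from h)]
      · rw [hQdef, indicator_of_notMem (show (y, s) ∉ {p : ℝ × ℝ | p.2 ≤ p.1} from h),
          indicator_of_notMem (show s ∉ Iic y from h)]
    have hsetIoc : ∀ y : ℝ, Ioi (0:ℝ) ∩ Iic y = Ioc 0 y := by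
      intro y; ext x; simp [mem_Ioc, mem_Ioi, mem_Iic, mem_inter_iff]
    have hinner : ∀ y : ℝ, (∫ s in Ioi (0:ℝ), Q (y, s)) =
        (∫ s in Ioc 0 y, wfn t r s) * U.2 y := by
      intro y
      rw [hslice1 y, setIntegral_indicator measurableSet_Iic, hsetIoc y, integral_mul_const]
    have hQint : Integrable Q
        ((volume.restrict (Ioi (0:ℝ))).prod (volume.restrict (Ioi (0:ℝ)))) := by
      rw [integrable_prod_iff hQmeas.aestronglyMeasurable]
      constructor
      · filter_upwards with y
        rw [hslice1 y]
        exact (((wfn_int ht r).mul_const (U.2 y)).integrableOn).indicator measurableSet_Iic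
      · have hae : (fun y => ∫ s in Ioi (0:ℝ), ‖Q (y, s)‖) =ᵐ[volume.restrict (Ioi 0)]
            (fun y => (∫ s in Ioc 0 y, wfn t r s) * U.2 y) := by
          filter_upwards with y
          rw [← hinner y]
          refine integral_congr_ae ?_
          filter_upwards [ae_restrict_mem measurableSet_Ioi] with s hs
          have hq := congrFun (hslice1 y) s
          rw [hq, Real.norm_eq_abs, abs_of_nonneg]
          exact indicator_nonneg (fun u _ => mul_nonneg (wfn_nonneg ht hr (le_of_lt hs))
            (hρ.nonneg y)) s
        exact Integrable.congr (gInt ht hr hρ) hae.symm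
    have hQint' : Integrable (Function.uncurry fun y s => Q (y, s))
        ((volume.restrict (Ioi (0:ℝ))).prod (volume.restrict (Ioi (0:ℝ)))) := hQint
    have hswap := integral_integral_swap hQint' 
    have hout : ∀ s ∈ Ioi (0:ℝ), (∫ y in Ioi (0:ℝ), Q (y, s)) = wfn t r s * tl U.2 s := by
      intro s hs
      have hslice2 : (fun y => Q (y, s)) = (Ici s).indicator (fun y => wfn t r s * U.2 y) := by
        funext y
        by_cases h : s ≤ y
        · rw [hQdef, indicator_of_mem (show (y, s) ∈ {p : ℝ × ℝ | p.2 ≤ p.1} from h),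
            indicator_of_mem (show y ∈ Ici s from h)]
        · rw [hQdef, indicator_of_notMem (show (y, s) ∉ {p : ℝ × ℝ | p.2 ≤ p.1} from h),
            indicator_of_notMem (show y ∉ Ici s from h)]
      rw [hslice2, setIntegral_indicator measurableSet_Ici]
      have hset : Ioi (0:ℝ) ∩ Ici s = Ici s :=
        inter_eq_self_of_subset_right (fun x hx => mem_Ioi.2 (lt_of_lt_of_le hs hx))
      rw [hset, MeasureTheory.integral_const_mul, integral_Ici_eq_integral_Ioi]
      rfl
    calc (∫ y in Ioi (0:ℝ), (∫ s in Ioc 0 y, wfn t r s) * U.2 y)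
        = ∫ y in Ioi (0:ℝ), ∫ s in Ioi (0:ℝ), Q (y, s) := by
          refine setIntegral_congr_fun measurableSet_Ioi fun y _ => (hinner y).symm
      _ = ∫ s in Ioi (0:ℝ), ∫ y in Ioi (0:ℝ), Q (y, s) := hswap
      _ = ∫ s in Ioi 0, wfn t r s * tl U.2 s :=
          setIntegral_congr_fun measurableSet_Ioi fun s hs => hout s hs
  rw [hbc, hd]
  have h2 : (∫ s in Ioi 0, wfn t r s * tl U.2 s) = ∫ s in Ioi 0, wfn t r s * tailF U s :=
    setIntegral_congr_fun measurableSet_Ioi fun s hs => by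
      rw [tailF_pos_eq (ne_of_gt hs)]
  rw [h2, tailF_zero_eq]
  show U.1 * Kb t r 0 + (Kb t r 0 * tl U.2 0 + _) = _
  ring

/-- Heat evolution preserves the (mod `m`) mass-transport order. -/
lemma heat_mono_mod {t m : ℝ} (ht : 0 < t) (hm : 0 ≤ m) {U V : UEl}
    (hU : NiceC U) (hV : NiceC V) (hle : UleMod U V m) :
    UleMod (heat t U) (heat t V) m := by
  intro r hr
  rw [heat_rep ht hU hr, heat_rep ht hV hr]
  have h0 := hle 0 le_rfl
  have hW := wfn_total ht hr
  have hKb0 : 0 ≤ Kb t r 0 := Kb_nonneg ht r 0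
  have hWnn : 0 ≤ ∫ s in Ioi (0:ℝ), wfn t r s :=
    setIntegral_nonneg measurableSet_Ioi (fun s hs => wfn_nonneg ht hr (le_of_lt hs))
  have hintU := wfn_mul_tailF_int (r := r) ht hU
  have hintV := wfn_mul_tailF_int (r := r) ht hV
  have hmono : (∫ s in Ioi 0, wfn t r s * tailF U s) ≤
      (∫ s in Ioi 0, wfn t r s * tailF V s) + m * ∫ s in Ioi (0:ℝ), wfn t r s := by
    rw [← MeasureTheory.integral_const_mul, ← integral_add hintV
      (((wfn_int ht r).integrableOn).const_mul m)]
    refine setIntegral_mono_on hintU ?_ measurableSet_Ioi fun s hs => ?_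
    · exact hintV.add (((wfn_int ht r).integrableOn).const_mul m)
    · have hw := wfn_nonneg ht hr (le_of_lt hs)
      have := hle s (le_of_lt hs)
      calc wfn t r s * tailF U s ≤ wfn t r s * (tailF V s + m) :=
            mul_le_mul_of_nonneg_left this hw
        _ = wfn t r s * tailF V s + m * wfn t r s := by ring
  have hfirst : tailF U 0 * Kb t r 0 ≤ tailF V 0 * Kb t r 0 + m * Kb t r 0 := by
    have := mul_le_mul_of_nonneg_right h0 hKb0
    linarith [this]
  calc tailF U 0 * Kb t r 0 + ∫ s in Ioi 0, wfn t r s * tailF U s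
      ≤ (tailF V 0 * Kb t r 0 + m * Kb t r 0) +
        ((∫ s in Ioi 0, wfn t r s * tailF V s) + m * ∫ s in Ioi (0:ℝ), wfn t r s) :=
        add_le_add hfirst hmono
    _ = (tailF V 0 * Kb t r 0 + ∫ s in Ioi 0, wfn t r s * tailF V s) +
        m * (Kb t r 0 + ∫ s in Ioi (0:ℝ), wfn t r s) := by ring
    _ = _ := by rw [hW, mul_one]

end

noncomputable section

lemma Gneum_symm (t x y : ℝ) : Gneum t x y = Gneum t y x := by
  rw [Gneum_eq_gk, Gneum_eq_gk]
  rw [show x - y = -(y - x) by ring, gk_even, show x + y = y + x by ring]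

lemma Gneum_int' {t : ℝ} (ht : 0 < t) (x : ℝ) : Integrable (fun y => Gneum t x y) :=
  (Gneum_int ht x).congr (Filter.Eventually.of_forall fun y => Gneum_symm t y x)

lemma GG_int {s t : ℝ} (hs : 0 < s) (ht : 0 < t) (x z : ℝ) :
    Integrable (fun y => Gneum s x y * Gneum t y z) := by
  refine (Integrable.bdd_mul (c := 2 * (Real.sqrt (2 * Real.pi * t))⁻¹) (Gneum_int' hs x)
    (Gneum_contl t z).aestronglyMeasurable ?_).congr
    (Filter.Eventually.of_forall fun y => mul_comm _ _)
  filter_upwards with y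
  rw [Real.norm_eq_abs, abs_of_nonneg (Gneum_nonneg t y z)]
  exact Gneum_le ht y z

lemma Gρ_int {t : ℝ} (ht : 0 < t) {ρ : ℝ → ℝ} (hρ : Gd ρ) (y : ℝ) :
    Integrable (fun r' => Gneum t y r' * ρ r') (volume.restrict (Ioi 0)) := by
  refine Integrable.bdd_mul (c := 2 * (Real.sqrt (2 * Real.pi * t))⁻¹) hρ.int0
    (Gneum_contr t y).aestronglyMeasurable ?_
  filter_upwards with r'
  rw [Real.norm_eq_abs, abs_of_nonneg (Gneum_nonneg t y r')]
  exact Gneum_le ht y r'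

set_option maxHeartbeats 4000000 in
lemma heat_heat {s t : ℝ} (hs : 0 < s) (ht : 0 < t) {U : UEl} (hU : NiceC U) :
    heat s (heat t U) = heat (s + t) U := by
  have hρ : Gd U.2 := hU.2
  set h : ℝ → ℝ := fun y => ∫ r' in Ioi 0, Gneum t y r' * U.2 r' with hh
  have hAESM : AEStronglyMeasurable h (volume.restrict (Ioi (0:ℝ))) := by
    have hm : Measurable (fun p : ℝ × ℝ => Gneum t p.1 p.2 * U.2 p.2) :=
      (Gneum_cont t).measurable.mul (hρ.meas.comp measurable_snd)
    exact (StronglyMeasurable.integral_prod_right'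
      (f := fun p : ℝ × ℝ => Gneum t p.1 p.2 * U.2 p.2)
      (ν := volume.restrict (Ioi 0)) hm.stronglyMeasurable).measurable.aestronglyMeasurable
  have hnn : ∀ y, 0 ≤ h y := fun y =>
    integral_nonneg fun r' => mul_nonneg (Gneum_nonneg _ _ _) (hρ.nonneg r')
  have hbd : ∀ y, h y ≤ 2 * (Real.sqrt (2 * Real.pi * t))⁻¹ * tl U.2 0 := by
    intro y
    rw [hh]
    have step : (∫ r' in Ioi (0:ℝ), Gneum t y r' * U.2 r') ≤
        ∫ r' in Ioi (0:ℝ), (2 * (Real.sqrt (2 * Real.pi * t))⁻¹) * U.2 r' := by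
      refine setIntegral_mono_on (Gρ_int ht hρ y) (hρ.int0.const_mul _) measurableSet_Ioi
        (fun r' _ => mul_le_mul_of_nonneg_right (Gneum_le ht y r') (hρ.nonneg r'))
    rw [MeasureTheory.integral_const_mul] at step
    exact step
  refine Prod.ext rfl (funext fun x => ?_)
  show (heat t U).1 * Gneum s x 0 + (∫ y in Ioi 0, Gneum s x y * (heat t U).2 y) =
    U.1 * Gneum (s + t) x 0 + ∫ r' in Ioi 0, Gneum (s + t) x r' * U.2 r'
  have e0 : (heat t U).1 = 0 := rfl
  have e1 : ∀ y, (heat t U).2 y = U.1 * Gneum t y 0 + h y := fun y => rfl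
  rw [e0, zero_mul, zero_add]
  have iA : Integrable (fun y => Gneum s x y * (U.1 * Gneum t y 0))
      (volume.restrict (Ioi 0)) := by
    refine (((GG_int hs ht x 0).const_mul U.1).congr
      (Filter.Eventually.of_forall fun y => by ring)).integrableOn
  have iB : Integrable (fun y => Gneum s x y * h y) (volume.restrict (Ioi 0)) := by
    refine (Integrable.bdd_mul (c := 2 * (Real.sqrt (2 * Real.pi * t))⁻¹ * tl U.2 0)
      ((Gneum_int' hs x).integrableOn) hAESM ?_).congr
      (Filter.Eventually.of_forall fun y => mul_comm _ _)
    filter_upwards with y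
    rw [Real.norm_eq_abs, abs_of_nonneg (hnn y)]
    exact hbd y
  have hsplit : (∫ y in Ioi 0, Gneum s x y * (heat t U).2 y) =
      (∫ y in Ioi 0, Gneum s x y * (U.1 * Gneum t y 0)) +
      ∫ y in Ioi 0, Gneum s x y * h y := by
    rw [← integral_add iA iB]
    refine setIntegral_congr_fun measurableSet_Ioi fun y _ => ?_
    rw [e1 y]
    ring
  rw [hsplit]
  have hA : (∫ y in Ioi 0, Gneum s x y * (U.1 * Gneum t y 0)) = U.1 * Gneum (s + t) x 0 := by
    have : (∫ y in Ioi 0, Gneum s x y * (U.1 * Gneum t y 0)) =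
        ∫ y in Ioi 0, U.1 * (Gneum s x y * Gneum t y 0) :=
      setIntegral_congr_fun measurableSet_Ioi fun y _ => by ring
    rw [this, MeasureTheory.integral_const_mul, Gneum_CK hs ht x 0]
  have hB : (∫ y in Ioi 0, Gneum s x y * h y) =
      ∫ r' in Ioi 0, Gneum (s + t) x r' * U.2 r' := by
    set P : ℝ × ℝ → ℝ := fun p => Gneum s x p.1 * (Gneum t p.1 p.2 * U.2 p.2) with hP
    have hPmeas : AEStronglyMeasurable P
        ((volume.restrict (Ioi (0:ℝ))).prod (volume.restrict (Ioi (0:ℝ)))) := by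
      apply Measurable.aestronglyMeasurable
      exact (((Gneum_contr s x).comp continuous_fst).measurable).mul
        ((Gneum_cont t).measurable.mul (hρ.meas.comp measurable_snd))
    have hPint : Integrable P
        ((volume.restrict (Ioi (0:ℝ))).prod (volume.restrict (Ioi (0:ℝ)))) := by
      rw [integrable_prod_iff hPmeas]
      constructor
      · filter_upwards with y
        have hPs : (fun r' => P (y, r')) = fun r' => Gneum s x y * (Gneum t y r' * U.2 r') := rfl
        rw [hPs]
        exact (Gρ_int ht hρ y).const_mul (Gneum s x y)
      · have hae : (fun y => ∫ r' in Ioi (0:ℝ), ‖P (y, r')‖) =ᵐ[volume.restrict (Ioi 0)]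
            (fun y => Gneum s x y * h y) := by
          filter_upwards with y
          have : ∀ r', ‖P (y, r')‖ = Gneum s x y * (Gneum t y r' * U.2 r') := fun r' => by
            rw [Real.norm_eq_abs, abs_of_nonneg]
            exact mul_nonneg (Gneum_nonneg _ _ _)
              (mul_nonneg (Gneum_nonneg _ _ _) (hρ.nonneg r'))
          simp_rw [this]
          rw [MeasureTheory.integral_const_mul]
        exact Integrable.congr iB hae.symm
    have hPint' : Integrable (Function.uncurry fun y r' => P (y, r'))
        ((volume.restrict (Ioi (0:ℝ))).prod (volume.restrict (Ioi (0:ℝ)))) := hPint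
    have hswap := integral_integral_swap hPint'
    have hleft : (∫ y in Ioi 0, Gneum s x y * h y) =
        ∫ y in Ioi (0:ℝ), ∫ r' in Ioi (0:ℝ), P (y, r') := by
      refine setIntegral_congr_fun measurableSet_Ioi fun y _ => ?_
      rw [hh]
      show Gneum s x y * _ = _
      rw [← MeasureTheory.integral_const_mul]
    have hright : (∫ r' in Ioi (0:ℝ), ∫ y in Ioi (0:ℝ), P (y, r')) =
        ∫ r' in Ioi 0, Gneum (s + t) x r' * U.2 r' := by
      refine setIntegral_congr_fun measurableSet_Ioi fun r' _ => ?_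
      have : (∫ y in Ioi (0:ℝ), P (y, r')) =
          ∫ y in Ioi (0:ℝ), (Gneum s x y * Gneum t y r') * U.2 r' :=
        setIntegral_congr_fun measurableSet_Ioi fun y _ => by rw [hP]; ring
      rw [this, integral_mul_const, Gneum_CK hs ht x r']
    rw [hleft, hswap, hright]
  rw [hA, hB]

end

noncomputable section

lemma cut_nice {U : UEl} {j b : ℝ} (hU : NiceC U) (h0 : U.1 = 0)
    (hjb : 0 < j * b) (hmass : j * b < tailF U 0) :
    NiceC (cutPaste j b U) ∧ tailF (cutPaste j b U) 0 = tailF U 0 ∧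
    (∀ r, 0 < r → tailF (cutPaste j b U) r = max (tailF U r - j * b) 0) := by
  obtain ⟨c, f⟩ := U
  have hc : c = 0 := h0
  subst hc
  have hf : Gd f := hU.2
  have hm' : j * b < tl f 0 := by
    rw [tailF_zero_eq] at hmass
    simpa using hmass
  obtain ⟨hgd, hatom, hmass0, hform⟩ := cutPaste_tail hf hjb hm'
  refine ⟨⟨by rw [hatom]; exact hjb.le, hgd⟩, ?_, ?_⟩
  · rw [hmass0, tailF_zero_eq]
    simp [tl]
  · intro r hr
    rw [hform r hr, tailF_pos_eq (ne_of_gt hr)]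

lemma heat_mono {t : ℝ} (ht : 0 < t) {U V : UEl} (hU : NiceC U) (hV : NiceC V)
    (h : Ule U V) : Ule (heat t U) (heat t V) := by
  intro r hr
  have := heat_mono_mod ht le_rfl hU hV (fun r hr => by rw [add_zero]; exact h r hr) r hr
  rwa [add_zero] at this

end

noncomputable section

set_option maxHeartbeats 2000000 in
theorem barriers_nesting' (j δ : ℝ) (hj : 0 < j) (hδ : 0 < δ)
    (u' : ℝ → ℝ) (hu' : Gd u') (hju : j * δ < tl u' 0)
    (ℓ : ℕ) (hℓ : 0 < ℓ) :
    ∀ k : ℕ,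
      Ule (Sminus j δ ((0:ℝ), u') k) (Sminus j (δ / ℓ) ((0:ℝ), u') (k * ℓ)) ∧
      Ule (Sminus j (δ / ℓ) ((0:ℝ), u') (k * ℓ)) (Splus j (δ / ℓ) ((0:ℝ), u') (k * ℓ)) ∧
      Ule (Splus j (δ / ℓ) ((0:ℝ), u') (k * ℓ)) (Splus j δ ((0:ℝ), u') k) := by
  set U0 : UEl := ((0:ℝ), u') with hU0
  set M : ℝ := tl u' 0 with hM
  set δ' : ℝ := δ / ℓ with hδ'def
  have hℓR : (1:ℝ) ≤ (ℓ:ℝ) := by exact_mod_cast hℓ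
  have hℓ0 : (ℓ:ℝ) ≠ 0 := by positivity
  have hδ' : 0 < δ' := by rw [hδ'def]; positivity
  have hδ'le : δ' ≤ δ := by
    rw [hδ'def, div_le_iff₀ (by positivity : (0:ℝ) < (ℓ:ℝ))]
    nlinarith [hδ.le]
  have hLδ : (ℓ:ℝ) * δ' = δ := by
    rw [hδ'def]; field_simp
  have hjδ : 0 < j * δ := mul_pos hj hδ
  have hjδ' : 0 < j * δ' := mul_pos hj hδ'
  have hjδM : j * δ < M := hju
  have hjδ'M : j * δ' < M :=
    lt_of_le_of_lt (mul_le_mul_of_nonneg_left hδ'le hj.le) hjδM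
  have hU0n : NiceC U0 := ⟨le_rfl, hu'⟩
  have hU0m : tailF U0 0 = M := by rw [tailF_zero_eq]; simp [hU0, hM, tl]
  have hU00 : U0.1 = 0 := rfl
  -- niceness along the minus chain
  have minus_nice : ∀ (b : ℝ), 0 < b → j * b < M → ∀ n : ℕ,
      NiceC (Sminus j b U0 n) ∧ tailF (Sminus j b U0 n) 0 = M := by
    intro b hb hjbM n
    induction n with
    | zero => exact ⟨hU0n, hU0m⟩
    | succ n ih =>
      have hh := heat_nice hb ih.1
      have hmass : tailF (heat b (Sminus j b U0 n)) 0 = M := by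
        rw [heat_mass hb ih.1, ih.2]
      have hcut := cut_nice hh.1 hh.2 (mul_pos hj hb) (by rw [hmass]; exact hjbM)
      refine ⟨hcut.1, ?_⟩
      show tailF (cutPaste j b (heat b (Sminus j b U0 n))) 0 = M
      rw [hcut.2.1, hmass]
  -- niceness along the plus chain
  have plus_nice : ∀ (b : ℝ), 0 < b → j * b < M → ∀ n : ℕ,
      NiceC (Splus j b U0 n) ∧ tailF (Splus j b U0 n) 0 = M ∧ (Splus j b U0 n).1 = 0 := by
    intro b hb hjbM n
    induction n with
    | zero => exact ⟨hU0n, hU0m, hU00⟩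
    | succ n ih =>
      have hcut := cut_nice ih.1 ih.2.2 (mul_pos hj hb) (by rw [ih.2.1]; exact hjbM)
      have hh := heat_nice hb hcut.1
      refine ⟨hh.1, ?_, hh.2⟩
      show tailF (heat b (cutPaste j b (Splus j b U0 n))) 0 = M
      rw [heat_mass hb hcut.1, hcut.2.1, ih.2.1]
  -- Claim I : minus ≤ plus with the same (fine) step
  have claimI : ∀ n : ℕ, Ule (Sminus j δ' U0 n) (Splus j δ' U0 n) := by
    intro n
    induction n with
    | zero => exact fun r _ => le_rfl
    | succ n ih =>
      obtain ⟨hXn, hXm⟩ := minus_nice δ' hδ' hjδ'M n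
      obtain ⟨hYn, hYm, hY0⟩ := plus_nice δ' hδ' hjδ'M n
      have hHX := heat_nice hδ' hXn
      have hHXm : tailF (heat δ' (Sminus j δ' U0 n)) 0 = M := by
        rw [heat_mass hδ' hXn, hXm]
      have hcutX := cut_nice hHX.1 hHX.2 hjδ' (by rw [hHXm]; exact hjδ'M)
      have hcutY := cut_nice hYn hY0 hjδ' (by rw [hYm]; exact hjδ'M)
      have hmodY : UleMod (Splus j δ' U0 n) (cutPaste j δ' (Splus j δ' U0 n)) (j * δ') := by
        intro r hr
        rcases eq_or_lt_of_le hr with h | h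
        · rw [← h, hcutY.2.1]; linarith [hjδ'.le]
        · rw [hcutY.2.2 r h]
          have := le_max_left (tailF (Splus j δ' U0 n) r - j * δ') 0
          linarith
      have hmod := heat_mono_mod hδ' hjδ'.le hYn hcutY.1 hmodY
      have hmono := heat_mono hδ' hXn hYn ih
      intro r hr
      rcases eq_or_lt_of_le hr with h | h
      · rw [← h, (minus_nice δ' hδ' hjδ'M (n+1)).2, (plus_nice δ' hδ' hjδ'M (n+1)).2.1]
      · show tailF (cutPaste j δ' (heat δ' (Sminus j δ' U0 n))) r ≤
          tailF (heat δ' (cutPaste j δ' (Splus j δ' U0 n))) r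
        rw [hcutX.2.2 r h]
        have h1 := hmono r hr
        have h2 := hmod r hr
        have h3 := tailF_nonneg (heat_nice hδ' hcutY.1).1 r
        exact max_le (by linarith) h3
  -- Claim II : coarse minus ≤ fine minus
  have claimII : ∀ k : ℕ, Ule (Sminus j δ U0 k) (Sminus j δ' U0 (k * ℓ)) := by
    intro k
    induction k with
    | zero => intro r _; rw [Nat.zero_mul]; exact le_rfl
    | succ k ih =>
      obtain ⟨hAn, hAm⟩ := minus_nice δ hδ hjδM k
      have inner : ∀ m : ℕ, 1 ≤ m → m ≤ ℓ → ∀ r, 0 < r →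
          max (tailF (heat ((m:ℝ) * δ') (Sminus j δ U0 k)) r - j * ((m:ℝ) * δ')) 0 ≤
            tailF (Sminus j δ' U0 (k * ℓ + m)) r := by
        intro m
        induction m with
        | zero => omega
        | succ m ihm =>
          intro _ hm1
          have hcast : ((m + 1 : ℕ) : ℝ) = (m:ℝ) + 1 := by push_cast; ring
          rcases Nat.eq_zero_or_pos m with hm0 | hmpos
          · subst hm0
            intro r hrpos
            have e : ((0 + 1 : ℕ) : ℝ) * δ' = δ' := by norm_num
            rw [e]
            obtain ⟨hXn, hXm⟩ := minus_nice δ' hδ' hjδ'M (k * ℓ)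
            have hHX := heat_nice hδ' hXn
            have hcutX := cut_nice hHX.1 hHX.2 hjδ'
              (by rw [heat_mass hδ' hXn, hXm]; exact hjδ'M)
            show max (tailF (heat δ' (Sminus j δ U0 k)) r - j * δ') 0 ≤
              tailF (cutPaste j δ' (heat δ' (Sminus j δ' U0 (k * ℓ)))) r
            rw [hcutX.2.2 r hrpos]
            have := heat_mono hδ' hAn hXn ih r (le_of_lt hrpos)
            exact max_le_max (by linarith) le_rfl
          · intro r hrpos
            have hind := ihm hmpos (le_trans (Nat.le_succ m) hm1)
            have hmδ' : 0 < (m:ℝ) * δ' := mul_pos (by exact_mod_cast hmpos) hδ'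
            have hmδ'le : (m:ℝ) * δ' ≤ δ := by
              rw [← hLδ]
              have : (m:ℝ) ≤ (ℓ:ℝ) := by exact_mod_cast le_trans (Nat.le_succ m) hm1
              nlinarith [hδ'.le]
            have hZn := heat_nice hmδ' hAn
            have hZm : tailF (heat ((m:ℝ) * δ') (Sminus j δ U0 k)) 0 = M := by
              rw [heat_mass hmδ' hAn, hAm]
            have hjm : 0 < j * ((m:ℝ) * δ') := mul_pos hj hmδ'
            have hjmM : j * ((m:ℝ) * δ') < M :=
              lt_of_le_of_lt (mul_le_mul_of_nonneg_left hmδ'le hj.le) hjδM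
            have hcutW := cut_nice hZn.1 hZn.2 hjm (by rw [hZm]; exact hjmM)
            obtain ⟨hXn', hXm'⟩ := minus_nice δ' hδ' hjδ'M (k * ℓ + m)
            have hWle : Ule (cutPaste j ((m:ℝ) * δ') (heat ((m:ℝ) * δ') (Sminus j δ U0 k)))
                (Sminus j δ' U0 (k * ℓ + m)) := by
              intro r2 hr2
              rcases eq_or_lt_of_le hr2 with h | h
              · rw [← h, hcutW.2.1, hZm, hXm']
              · rw [hcutW.2.2 r2 h]
                exact hind r2 h
            have hmodW : UleMod (heat ((m:ℝ) * δ') (Sminus j δ U0 k))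
                (cutPaste j ((m:ℝ) * δ') (heat ((m:ℝ) * δ') (Sminus j δ U0 k)))
                (j * ((m:ℝ) * δ')) := by
              intro r2 hr2
              rcases eq_or_lt_of_le hr2 with h | h
              · rw [← h, hcutW.2.1]; linarith [hjm.le]
              · rw [hcutW.2.2 r2 h]
                have := le_max_left
                  (tailF (heat ((m:ℝ) * δ') (Sminus j δ U0 k)) r2 - j * ((m:ℝ) * δ')) 0
                linarith
            have h1 := heat_mono_mod hδ' hjm.le hZn.1 hcutW.1 hmodW
            have h2 := heat_mono hδ' hcutW.1 hXn' hWle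
            have hcomb : heat δ' (heat ((m:ℝ) * δ') (Sminus j δ U0 k)) =
                heat (((m:ℝ) + 1) * δ') (Sminus j δ U0 k) := by
              rw [heat_heat hδ' hmδ' hAn, show δ' + (m:ℝ) * δ' = ((m:ℝ) + 1) * δ' by ring]
            have hHXm' := heat_nice hδ' hXn'
            have hcutX := cut_nice hHXm'.1 hHXm'.2 hjδ'
              (by rw [heat_mass hδ' hXn', hXm']; exact hjδ'M)
            show max (tailF (heat (((m + 1 : ℕ) : ℝ) * δ') (Sminus j δ U0 k)) r -
                j * (((m + 1 : ℕ) : ℝ) * δ')) 0 ≤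
              tailF (cutPaste j δ' (heat δ' (Sminus j δ' U0 (k * ℓ + m)))) r
            rw [hcutX.2.2 r hrpos, hcast, ← hcomb]
            have hZr := h1 r (le_of_lt hrpos)
            have hWr := h2 r (le_of_lt hrpos)
            refine max_le ?_ (le_max_right _ _)
            have harith : j * (((m:ℝ) + 1) * δ') = j * ((m:ℝ) * δ') + j * δ' := by ring
            rw [harith]
            have hle1 : tailF (heat δ' (heat ((m:ℝ) * δ') (Sminus j δ U0 k))) r -
                (j * ((m:ℝ) * δ') + j * δ') ≤
                tailF (heat δ' (Sminus j δ' U0 (k * ℓ + m))) r - j * δ' := by linarith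
            exact le_trans hle1 (le_max_left _ _)
      intro r hr
      rcases eq_or_lt_of_le hr with h | h
      · rw [← h, (minus_nice δ hδ hjδM (k+1)).2, (minus_nice δ' hδ' hjδ'M ((k+1) * ℓ)).2]
      · have hHA := heat_nice hδ hAn
        have hcutA := cut_nice hHA.1 hHA.2 hjδ
          (by rw [heat_mass hδ hAn, hAm]; exact hjδM)
        show tailF (cutPaste j δ (heat δ (Sminus j δ U0 k))) r ≤ _
        rw [hcutA.2.2 r h]
        have hin := inner ℓ hℓ le_rfl r h
        rw [hLδ] at hin
        rw [show k * ℓ + ℓ = (k+1) * ℓ by ring] at hin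
        exact hin
  -- Claim III : fine plus ≤ coarse plus
  have claimIII : ∀ k : ℕ, Ule (Splus j δ' U0 (k * ℓ)) (Splus j δ U0 k) := by
    intro k
    induction k with
    | zero => intro r _; rw [Nat.zero_mul]; exact le_rfl
    | succ k ih =>
      obtain ⟨hBn, hBm, hB0⟩ := plus_nice δ hδ hjδM k
      have inner : ∀ m : ℕ, 1 ≤ m → m ≤ ℓ →
          Ule (Splus j δ' U0 (k * ℓ + m))
            (heat ((m:ℝ) * δ') (cutPaste j ((m:ℝ) * δ') (Splus j δ U0 k))) := by
        intro m
        induction m with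
        | zero => omega
        | succ m ihm =>
          intro _ hm1
          have hcast : ((m + 1 : ℕ) : ℝ) = (m:ℝ) + 1 := by push_cast; ring
          rcases Nat.eq_zero_or_pos m with hm0 | hmpos
          · subst hm0
            have e : ((0 + 1 : ℕ) : ℝ) * δ' = δ' := by norm_num
            rw [e]
            obtain ⟨hYn, hYm, hY0⟩ := plus_nice δ' hδ' hjδ'M (k * ℓ)
            have hcutY := cut_nice hYn hY0 hjδ' (by rw [hYm]; exact hjδ'M)
            have hcutB := cut_nice hBn hB0 hjδ' (by rw [hBm]; exact hjδ'M)
            have hle : Ule (cutPaste j δ' (Splus j δ' U0 (k * ℓ)))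
                (cutPaste j δ' (Splus j δ U0 k)) := by
              intro r hr
              rcases eq_or_lt_of_le hr with h | h
              · rw [← h, hcutY.2.1, hcutB.2.1, hYm, hBm]
              · rw [hcutY.2.2 r h, hcutB.2.2 r h]
                exact max_le_max (by linarith [ih r (le_of_lt h)]) le_rfl
            exact heat_mono hδ' hcutY.1 hcutB.1 hle
          · have hind := ihm hmpos (le_trans (Nat.le_succ m) hm1)
            have hmδ' : 0 < (m:ℝ) * δ' := mul_pos (by exact_mod_cast hmpos) hδ'
            have hmδ'le : (m:ℝ) * δ' ≤ δ := by
              rw [← hLδ]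
              have : (m:ℝ) ≤ (ℓ:ℝ) := by exact_mod_cast le_trans (Nat.le_succ m) hm1
              nlinarith [hδ'.le]
            have hm1δ' : 0 < ((m:ℝ) + 1) * δ' := by positivity
            have hm1δ'le : ((m:ℝ) + 1) * δ' ≤ δ := by
              rw [← hLδ]
              have : (m:ℝ) + 1 ≤ (ℓ:ℝ) := by
                have : ((m+1 : ℕ) : ℝ) ≤ (ℓ:ℝ) := by exact_mod_cast hm1
                rwa [hcast] at this
              nlinarith [hδ'.le]
            have hjm : 0 < j * ((m:ℝ) * δ') := mul_pos hj hmδ'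
            have hjmM : j * ((m:ℝ) * δ') < M :=
              lt_of_le_of_lt (mul_le_mul_of_nonneg_left hmδ'le hj.le) hjδM
            have hjm1 : 0 < j * (((m:ℝ) + 1) * δ') := mul_pos hj hm1δ'
            have hjm1M : j * (((m:ℝ) + 1) * δ') < M :=
              lt_of_le_of_lt (mul_le_mul_of_nonneg_left hm1δ'le hj.le) hjδM
            -- V_m and V_{m+1}
            have hcutVm := cut_nice hBn hB0 hjm (by rw [hBm]; exact hjmM)
            have hcutVm1 := cut_nice hBn hB0 hjm1 (by rw [hBm]; exact hjm1M)
            have hZVn := heat_nice hmδ' hcutVm.1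
            have hZVm : tailF (heat ((m:ℝ) * δ') (cutPaste j ((m:ℝ) * δ') (Splus j δ U0 k))) 0
                = M := by
              rw [heat_mass hmδ' hcutVm.1, hcutVm.2.1, hBm]
            -- Y side
            obtain ⟨hYn, hYm, hY0⟩ := plus_nice δ' hδ' hjδ'M (k * ℓ + m)
            have hcutY := cut_nice hYn hY0 hjδ' (by rw [hYm]; exact hjδ'M)
            have hcutZV := cut_nice hZVn.1 hZVn.2 hjδ' (by rw [hZVm]; exact hjδ'M)
            -- cut monotone : cut Y ≤ cut (heat mδ' V_m)
            have hstep1 : Ule (cutPaste j δ' (Splus j δ' U0 (k * ℓ + m)))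
                (cutPaste j δ'
                  (heat ((m:ℝ) * δ') (cutPaste j ((m:ℝ) * δ') (Splus j δ U0 k)))) := by
              intro r hr
              rcases eq_or_lt_of_le hr with h | h
              · rw [← h, hcutY.2.1, hcutZV.2.1, hYm, hZVm]
              · rw [hcutY.2.2 r h, hcutZV.2.2 r h]
                exact max_le_max (by linarith [hind r (le_of_lt h)]) le_rfl
            -- key : cut (heat mδ' V_m) ≤ heat mδ' V_{m+1}
            have hmodV : UleMod (cutPaste j ((m:ℝ) * δ') (Splus j δ U0 k))
                (cutPaste j (((m:ℝ) + 1) * δ') (Splus j δ U0 k)) (j * δ') := by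
              intro r hr
              rcases eq_or_lt_of_le hr with h | h
              · rw [← h, hcutVm.2.1, hcutVm1.2.1]; linarith [hjδ'.le]
              · rw [hcutVm.2.2 r h, hcutVm1.2.2 r h]
                have harith : j * (((m:ℝ) + 1) * δ') = j * ((m:ℝ) * δ') + j * δ' := by ring
                rw [harith]
                refine max_le ?_ ?_
                · linarith [le_max_left
                    (tailF (Splus j δ U0 k) r - (j * ((m:ℝ) * δ') + j * δ')) 0]
                · linarith [le_max_right
                    (tailF (Splus j δ U0 k) r - (j * ((m:ℝ) * δ') + j * δ')) 0, hjδ'.le]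
            have hmod := heat_mono_mod hmδ' hjδ'.le hcutVm.1 hcutVm1.1 hmodV
            have hZV1n := heat_nice hmδ' hcutVm1.1
            have hstep2 : Ule (cutPaste j δ'
                  (heat ((m:ℝ) * δ') (cutPaste j ((m:ℝ) * δ') (Splus j δ U0 k))))
                (heat ((m:ℝ) * δ') (cutPaste j (((m:ℝ) + 1) * δ') (Splus j δ U0 k))) := by
              intro r hr
              rcases eq_or_lt_of_le hr with h | h
              · rw [← h, hcutZV.2.1, hZVm, heat_mass hmδ' hcutVm1.1, hcutVm1.2.1, hBm]
              · rw [hcutZV.2.2 r h]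
                have h1 := hmod r hr
                have h2 := tailF_nonneg hZV1n.1 r
                exact max_le (by linarith) h2
            have hfinal1 := heat_mono hδ' hcutY.1 hcutZV.1 hstep1
            have hfinal2 := heat_mono hδ' hcutZV.1 hZV1n.1 hstep2
            have hcomb : heat δ' (heat ((m:ℝ) * δ')
                  (cutPaste j (((m:ℝ) + 1) * δ') (Splus j δ U0 k))) =
                heat (((m:ℝ) + 1) * δ') (cutPaste j (((m:ℝ) + 1) * δ') (Splus j δ U0 k)) := by
              rw [heat_heat hδ' hmδ' hcutVm1.1,
                show δ' + (m:ℝ) * δ' = ((m:ℝ) + 1) * δ' by ring]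
            intro r hr
            show tailF (heat δ' (cutPaste j δ' (Splus j δ' U0 (k * ℓ + m)))) r ≤
              tailF (heat (((m + 1 : ℕ) : ℝ) * δ')
                (cutPaste j (((m + 1 : ℕ) : ℝ) * δ') (Splus j δ U0 k))) r
            rw [hcast, ← hcomb]
            exact le_trans (hfinal1 r hr) (hfinal2 r hr)
      have hin := inner ℓ hℓ le_rfl
      rw [hLδ] at hin
      rw [show k * ℓ + ℓ = (k + 1) * ℓ by ring] at hin
      exact hin
  intro k
  exact ⟨claimII k, claimI (k * ℓ), claimIII k⟩

end

noncomputable section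

lemma heat_congr' (t c : ℝ) {f f' : ℝ → ℝ}
    (hae : f =ᵐ[volume.restrict (Ioi (0:ℝ))] f') : heat t (c, f) = heat t (c, f') := by
  refine Prod.ext rfl (funext fun x => ?_)
  show c * Gneum t x 0 + (∫ r' in Ioi 0, Gneum t x r' * f r') =
    c * Gneum t x 0 + ∫ r' in Ioi 0, Gneum t x r' * f' r'
  congr 1
  exact integral_congr_ae (hae.mono fun r' h => by simp only [h])

lemma tailF_congr {c : ℝ} {f f' : ℝ → ℝ}
    (hae : f =ᵐ[volume.restrict (Ioi (0:ℝ))] f') {r : ℝ} (hr : 0 ≤ r) :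
    tailF (c, f) r = tailF (c, f') r := by
  unfold tailF
  congr 1
  exact integral_congr_ae (ae_restrict_of_ae_restrict_of_subset (Ioi_subset_Ioi hr) hae)

lemma Rdelta_congr (j b c : ℝ) {f f' : ℝ → ℝ}
    (hae : f =ᵐ[volume.restrict (Ioi (0:ℝ))] f') :
    Rdelta j b (c, f) = Rdelta j b (c, f') := by
  unfold Rdelta
  congr 1
  ext r
  simp only [mem_setOf_eq]
  constructor
  · rintro ⟨hr, h2⟩; exact ⟨hr, by rw [← tailF_congr hae hr]; exact h2⟩
  · rintro ⟨hr, h2⟩; exact ⟨hr, by rw [tailF_congr hae hr]; exact h2⟩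

lemma cut_heat_congr (j b t c : ℝ) {f f' : ℝ → ℝ}
    (hae : f =ᵐ[volume.restrict (Ioi (0:ℝ))] f') :
    heat t (cutPaste j b (c, f)) = heat t (cutPaste j b (c, f')) := by
  unfold cutPaste
  rw [Rdelta_congr j b c hae]
  refine heat_congr' t _ (hae.mono fun x h => ?_)
  by_cases hx : x ∈ Icc 0 (Rdelta j b (c, f'))
  · rw [indicator_of_mem hx, indicator_of_mem hx]; exact h
  · rw [indicator_of_notMem hx, indicator_of_notMem hx]

lemma Sminus_congr (j b : ℝ) {u u' : ℝ → ℝ}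
    (hae : u =ᵐ[volume.restrict (Ioi (0:ℝ))] u') :
    ∀ n : ℕ, Sminus j b ((0:ℝ), u) (n+1) = Sminus j b ((0:ℝ), u') (n+1) := by
  intro n
  induction n with
  | zero =>
    show cutPaste j b (heat b ((0:ℝ), u)) = cutPaste j b (heat b ((0:ℝ), u'))
    rw [heat_congr' b 0 hae]
  | succ n ih =>
    show cutPaste j b (heat b (Sminus j b ((0:ℝ), u) (n+1))) =
      cutPaste j b (heat b (Sminus j b ((0:ℝ), u') (n+1)))
    rw [ih]

lemma Splus_congr (j b : ℝ) {u u' : ℝ → ℝ}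
    (hae : u =ᵐ[volume.restrict (Ioi (0:ℝ))] u') :
    ∀ n : ℕ, Splus j b ((0:ℝ), u) (n+1) = Splus j b ((0:ℝ), u') (n+1) := by
  intro n
  induction n with
  | zero =>
    show heat b (cutPaste j b ((0:ℝ), u)) = heat b (cutPaste j b ((0:ℝ), u'))
    exact cut_heat_congr j b b 0 hae
  | succ n ih =>
    show heat b (cutPaste j b (Splus j b ((0:ℝ), u) (n+1))) =
      heat b (cutPaste j b (Splus j b ((0:ℝ), u') (n+1)))
    rw [ih]

lemma Sminus_tail_congr (j b : ℝ) {u u' : ℝ → ℝ}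
    (hae : u =ᵐ[volume.restrict (Ioi (0:ℝ))] u') (n : ℕ) {r : ℝ} (hr : 0 ≤ r) :
    tailF (Sminus j b ((0:ℝ), u) n) r = tailF (Sminus j b ((0:ℝ), u') n) r := by
  cases n with
  | zero => exact tailF_congr hae hr
  | succ n => rw [Sminus_congr j b hae n]

lemma Splus_tail_congr (j b : ℝ) {u u' : ℝ → ℝ}
    (hae : u =ᵐ[volume.restrict (Ioi (0:ℝ))] u') (n : ℕ) {r : ℝ} (hr : 0 ≤ r) :
    tailF (Splus j b ((0:ℝ), u) n) r = tailF (Splus j b ((0:ℝ), u') n) r := by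
  cases n with
  | zero => exact tailF_congr hae hr
  | succ n => rw [Splus_congr j b hae n]

end

/-- nesting of the barriers under refinement of the time step
`δ' = δ/ℓ`; the barriers with step `δ'` at time `kδ` are evaluated after `kℓ` steps. -/
theorem barriers_nesting (j δ : ℝ) (hj : 0 < j) (hδ : 0 < δ)
    (u : ℝ → ℝ) (hu : goodFn u)
    (hju : j * δ < ∫ x in Set.Ioi (0:ℝ), u x)
    (ℓ : ℕ) (hℓ : 0 < ℓ) :
    ∀ k : ℕ,
      Ule (Sminus j δ ((0:ℝ), u) k) (Sminus j (δ / ℓ) ((0:ℝ), u) (k * ℓ)) ∧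
      Ule (Sminus j (δ / ℓ) ((0:ℝ), u) (k * ℓ)) (Splus j (δ / ℓ) ((0:ℝ), u) (k * ℓ)) ∧
      Ule (Splus j (δ / ℓ) ((0:ℝ), u) (k * ℓ)) (Splus j δ ((0:ℝ), u) k) := by
  obtain ⟨h0u, hInt, Mu, hMu⟩ := hu
  obtain ⟨g, hgsm, hgae⟩ := hInt.1
  set u' : ℝ → ℝ := fun x => max 0 (min (g x) Mu) with hu'def
  have hmeas' : Measurable u' := measurable_const.max (hgsm.measurable.min measurable_const)
  have hae : u =ᵐ[volume.restrict (Ioi (0:ℝ))] u' := by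
    refine hgae.mono fun x hx => ?_
    rw [hu'def]
    show u x = max 0 (min (g x) Mu)
    rw [← hx, min_eq_left (hMu x), max_eq_right (h0u x)]
  have hGd : Gd u' :=
    ⟨hmeas', fun x => le_max_left 0 _, hInt.congr hae,
      ⟨max 0 Mu, fun x => max_le_max le_rfl (min_le_right _ _)⟩⟩
  have hju' : j * δ < tl u' 0 := by
    have : tl u' 0 = ∫ x in Set.Ioi (0:ℝ), u x := integral_congr_ae hae.symm
    rw [this]
    exact hju
  have main := barriers_nesting' j δ hj hδ u' hGd hju' ℓ hℓ
  intro k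
  obtain ⟨h1, h2, h3⟩ := main k
  refine ⟨?_, ?_, ?_⟩
  · intro r hr
    rw [Sminus_tail_congr j δ hae k hr, Sminus_tail_congr j (δ / ℓ) hae (k * ℓ) hr]
    exact h1 r hr
  · intro r hr
    rw [Sminus_tail_congr j (δ / ℓ) hae (k * ℓ) hr, Splus_tail_congr j (δ / ℓ) hae (k * ℓ) hr]
    exact h2 r hr
  · intro r hr
    rw [Splus_tail_congr j (δ / ℓ) hae (k * ℓ) hr, Splus_tail_congr j δ hae k hr]
    exact h3 r hr
end

section
/- Closeness of the two barriers: let j > 0, let u ∈ L^∞(ℝ₊,ℝ₊) ∩ L¹(ℝ₊,ℝ₊), and let δ > 0 with jδ < F(0; u). Then for all k ∈ ℕ, |S^{(δ,+)}_{kδ}(u) − S^{(δ,−)}_{kδ}(u)|₁ ≤ 4jδ. -/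
open MeasureTheory Set Filter

/-! ### Auxiliary development for `barriers_close` -/

noncomputable section

namespace BC

open MeasureTheory Set Filter

variable {j δ : ℝ}

local notation "μ0" => volume.restrict (Ioi (0:ℝ))

/-! #### Gaussian kernel basics -/

/-- the base Gaussian -/
def gss (δ x : ℝ) : ℝ := Real.exp (-(1/(2*δ)) * x^2)

lemma sqrt_pos' (hδ : 0 < δ) : 0 < Real.sqrt (2 * Real.pi * δ) :=
  Real.sqrt_pos.2 (by positivity)

lemma gss_integrable (hδ : 0 < δ) : Integrable (gss δ) := by
  unfold gss
  exact integrable_exp_neg_mul_sq (by positivity)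

lemma gss_integral (hδ : 0 < δ) : ∫ x, gss δ x = Real.sqrt (2 * Real.pi * δ) := by
  have := integral_gaussian (1/(2*δ))
  unfold gss
  rw [this]
  congr 1
  field_simp

lemma gss_even (δ x : ℝ) : gss δ (-x) = gss δ x := by simp [gss]

lemma gneum_eq (δ r r' : ℝ) :
    Gneum δ r r' = (Real.sqrt (2 * Real.pi * δ))⁻¹ * (gss δ (r - r') + gss δ (r + r')) := by
  simp only [Gneum, gss]
  congr 2 <;> ring_nf

lemma gneum_nonneg (hδ : 0 < δ) (r r' : ℝ) : 0 ≤ Gneum δ r r' := by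
  rw [gneum_eq]
  have := (sqrt_pos' hδ)
  unfold gss
  positivity

lemma gneum_le (hδ : 0 < δ) (r r' : ℝ) :
    Gneum δ r r' ≤ 2 * (Real.sqrt (2 * Real.pi * δ))⁻¹ := by
  rw [gneum_eq]
  have hle : ∀ x : ℝ, gss δ x ≤ 1 := by
    intro x
    unfold gss
    rw [Real.exp_le_one_iff]
    have h0 : 0 ≤ (1/(2*δ)) * x^2 := by positivity
    linarith
  have h1 := hle (r - r')
  have h2 := hle (r + r')
  have hs := sqrt_pos' hδ
  rw [mul_comm]
  have : gss δ (r - r') + gss δ (r + r') ≤ 2 := by linarith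
  exact mul_le_mul_of_nonneg_right this (by positivity)

lemma gneum_continuous (δ : ℝ) : Continuous fun p : ℝ × ℝ => Gneum δ p.1 p.2 := by
  unfold Gneum
  fun_prop

/-- shift: `∫ x in Ioi 0, f (x + c) = ∫ x in Ioi c, f x` -/
lemma integral_Ioi_comp_add (f : ℝ → ℝ) (c : ℝ) :
    ∫ x in Ioi (0:ℝ), f (x + c) = ∫ x in Ioi c, f x := by
  have h := (measurePreserving_add_right (volume : Measure ℝ) c).setIntegral_preimage_emb
    (measurableEmbedding_addRight c) f (Ioi c)
  have hpre : (· + c) ⁻¹' (Ioi c) = Ioi (0:ℝ) := by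
    ext x; simp [mem_Ioi]
  rw [hpre] at h
  exact h

lemma gss_shift_integrable (hδ : 0 < δ) (c : ℝ) : Integrable (fun x => gss δ (x + c)) :=
  (gss_integrable hδ).comp_add_right c

lemma gneum_integrable (hδ : 0 < δ) (r' : ℝ) :
    Integrable (fun r => Gneum δ r r') μ0 := by
  have h1 : Integrable (fun r : ℝ =>
      (Real.sqrt (2 * Real.pi * δ))⁻¹ * (gss δ (r + (-r')) + gss δ (r + r'))) :=
    (((gss_shift_integrable hδ (-r')).add (gss_shift_integrable hδ r')).const_mul _)
  have := h1.restrict (s := Ioi (0:ℝ))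
  refine this.congr (Eventually.of_forall fun r => ?_)
  simp only [gneum_eq, sub_eq_add_neg]

lemma gneum_mass (hδ : 0 < δ) (r' : ℝ) :
    ∫ r in Ioi (0:ℝ), Gneum δ r r' = 1 := by
  have hs := sqrt_pos' hδ
  have e1 : ∫ r in Ioi (0:ℝ), gss δ (r - r') = ∫ x in Ioi (-r'), gss δ x := by
    rw [← integral_Ioi_comp_add (gss δ) (-r')]
    refine setIntegral_congr_fun measurableSet_Ioi fun r _ => ?_
    rw [← sub_eq_add_neg]
  have e2 : ∫ r in Ioi (0:ℝ), gss δ (r + r') = ∫ x in Ioi r', gss δ x :=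
    integral_Ioi_comp_add (gss δ) r'
  have e3 : ∫ x in Ioi r', gss δ x = ∫ x in Iio (-r'), gss δ x := by
    have : ∫ x in Ioi r', gss δ x = ∫ x in Ioi r', gss δ (-x) := by
      refine setIntegral_congr_fun measurableSet_Ioi fun x _ => ?_
      rw [gss_even]
    rw [this, integral_comp_neg_Ioi, integral_Iic_eq_integral_Iio]
  have e4 : (∫ x in Iio (-r'), gss δ x) + ∫ x in Ioi (-r'), gss δ x
      = Real.sqrt (2 * Real.pi * δ) := by
    rw [← integral_Iic_eq_integral_Iio, ← gss_integral hδ]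
    exact intervalIntegral.integral_Iic_add_Ioi ((gss_integrable hδ).integrableOn)
      ((gss_integrable hδ).integrableOn)
  have hg1 : Integrable (fun r => gss δ (r - r')) μ0 := by
    have := (gss_shift_integrable hδ (-r')).restrict (s := Ioi (0:ℝ))
    refine this.congr (Eventually.of_forall fun r => ?_); simp only [sub_eq_add_neg]
  have hg2 : Integrable (fun r => gss δ (r + r')) μ0 :=
    (gss_shift_integrable hδ r').restrict
  calc ∫ r in Ioi (0:ℝ), Gneum δ r r'
      = ∫ r in Ioi (0:ℝ), (Real.sqrt (2 * Real.pi * δ))⁻¹ *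
          (gss δ (r - r') + gss δ (r + r')) := by
        refine setIntegral_congr_fun measurableSet_Ioi fun r _ => ?_; rw [gneum_eq]
    _ = (Real.sqrt (2 * Real.pi * δ))⁻¹ *
          ((∫ r in Ioi (0:ℝ), gss δ (r - r')) + ∫ r in Ioi (0:ℝ), gss δ (r + r')) := by
        rw [integral_const_mul, integral_add hg1 hg2]
    _ = 1 := by
        rw [e1, e2, e3, add_comm, e4]
        field_simp

/-! #### Tail function and `Rdelta` -/

lemma tail_eq_sub {f : ℝ → ℝ} (hf : Integrable f) (r : ℝ) :
    ∫ x in Ioi r, f x = (∫ x in Ioi (0:ℝ), f x) - ∫ x in (0:ℝ)..r, f x := by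
  rcases le_or_gt 0 r with hr | hr
  · rw [intervalIntegral.integral_of_le hr]
    have hsplit : ∫ x in Ioi (0:ℝ), f x = (∫ x in Ioc 0 r, f x) + ∫ x in Ioi r, f x := by
      rw [← setIntegral_union (Ioc_disjoint_Ioi le_rfl) measurableSet_Ioi
        hf.integrableOn hf.integrableOn, Ioc_union_Ioi_eq_Ioi hr]
    linarith
  · rw [intervalIntegral.integral_of_ge hr.le]
    have hsplit : ∫ x in Ioi r, f x = (∫ x in Ioc r 0, f x) + ∫ x in Ioi (0:ℝ), f x := by
      rw [← setIntegral_union (Ioc_disjoint_Ioi le_rfl) measurableSet_Ioi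
        hf.integrableOn hf.integrableOn, Ioc_union_Ioi_eq_Ioi hr.le]
    linarith

lemma tail_continuous {f : ℝ → ℝ} (hf : Integrable f) :
    Continuous fun r => ∫ x in Ioi r, f x := by
  have h1 : Continuous fun r : ℝ => ∫ x in (0:ℝ)..r, f x :=
    intervalIntegral.continuous_primitive (fun a b => hf.intervalIntegrable) 0
  have h2 : (fun r : ℝ => ∫ x in Ioi r, f x)
      = fun r => (∫ x in Ioi (0:ℝ), f x) - ∫ x in (0:ℝ)..r, f x := by
    funext r; exact tail_eq_sub hf r
  rw [h2]
  exact continuous_const.sub h1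

lemma tail_tendsto_zero {f : ℝ → ℝ} (hf : Integrable f) :
    Tendsto (fun r => ∫ x in Ioi r, f x) atTop (nhds 0) := by
  have h1 := MeasureTheory.intervalIntegral_tendsto_integral_Ioi 0
    hf.integrableOn tendsto_id
  have h2 : (fun r : ℝ => ∫ x in Ioi r, f x)
      = fun r => (∫ x in Ioi (0:ℝ), f x) - ∫ x in (0:ℝ)..r, f x := by
    funext r; exact tail_eq_sub hf r
  rw [h2]
  simpa using (tendsto_const_nhds (x := ∫ x in Ioi (0:ℝ), f x)).sub h1

/-- Main lemma about `Rdelta`: it is `≥ 0` and the tail there equals `jδ`. -/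
lemma Rdelta_spec (hjδ : 0 < j * δ) {u : UEl} (hc : u.1 = 0)
    (h0 : ∀ r, 0 ≤ u.2 r) (hInt : Integrable u.2 μ0)
    (hm : j * δ < ∫ x in Ioi (0:ℝ), u.2 x) :
    0 ≤ Rdelta j δ u ∧ (∫ x in Ioi (Rdelta j δ u), u.2 x) = j * δ := by
  set f : ℝ → ℝ := indicator (Ioi 0) u.2 with hfdef
  have hInt' : IntegrableOn u.2 (Ioi 0) := hInt
  have hfInt : Integrable f := hInt'.integrable_indicator measurableSet_Ioi
  have key : ∀ r : ℝ, 0 ≤ r → ∫ x in Ioi r, f x = ∫ x in Ioi r, u.2 x := by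
    intro r hr
    rw [hfdef, setIntegral_indicator measurableSet_Ioi, Ioi_inter_Ioi,
      sup_eq_left.2 hr]
  have htail : ∀ r : ℝ, 0 ≤ r → tailF u r = ∫ x in Ioi r, f x := by
    intro r hr
    rw [tailF, key r hr]
    rcases eq_or_ne r 0 with h | h <;> simp [h, hc]
  have hSeq : {r : ℝ | 0 ≤ r ∧ tailF u r = j * δ}
      = Ici 0 ∩ (fun r => ∫ x in Ioi r, f x) ⁻¹' {j * δ} := by
    ext r
    simp only [mem_setOf_eq, mem_inter_iff, mem_Ici, mem_preimage, mem_singleton_iff]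
    constructor
    · rintro ⟨hr, h⟩; exact ⟨hr, by rw [← htail r hr]; exact h⟩
    · rintro ⟨hr, h⟩; exact ⟨hr, by rw [htail r hr]; exact h⟩
  have hclosed : IsClosed {r : ℝ | 0 ≤ r ∧ tailF u r = j * δ} := by
    rw [hSeq]
    exact isClosed_Ici.inter (isClosed_singleton.preimage (tail_continuous hfInt))
  have hne : {r : ℝ | 0 ≤ r ∧ tailF u r = j * δ}.Nonempty := by
    have hev : ∀ᶠ r in atTop, (∫ x in Ioi r, f x) < j * δ :=
      (tail_tendsto_zero hfInt).eventually_lt_const hjδ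
    obtain ⟨N, hN⟩ := hev.exists_forall_of_atTop
    set N' := max N 0 with hN'
    have hN'0 : (0:ℝ) ≤ N' := le_max_right _ _
    have hNval : (∫ x in Ioi N', f x) < j * δ := hN N' (le_max_left _ _)
    have h0val : j * δ < ∫ x in Ioi (0:ℝ), f x := by
      rw [key 0 le_rfl]; exact hm
    have hIVT := intermediate_value_Icc' hN'0
      ((tail_continuous hfInt).continuousOn (s := Icc 0 N'))
    have hmem : j * δ ∈ Icc (∫ x in Ioi N', f x) (∫ x in Ioi (0:ℝ), f x) :=
      ⟨hNval.le, h0val.le⟩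
    obtain ⟨r, hrIcc, hr⟩ := hIVT hmem
    exact ⟨r, hrIcc.1, by rw [htail r hrIcc.1]; exact hr⟩
  have hbdd : BddBelow {r : ℝ | 0 ≤ r ∧ tailF u r = j * δ} :=
    ⟨0, fun x hx => hx.1⟩
  have hmem := hclosed.csInf_mem hne hbdd
  obtain ⟨hR0, hRval⟩ := hmem
  have hRdef : Rdelta j δ u = sInf {r : ℝ | 0 ≤ r ∧ tailF u r = j * δ} := rfl
  rw [← hRdef] at hR0 hRval
  refine ⟨hR0, ?_⟩
  rw [tailF] at hRval
  rcases eq_or_ne (Rdelta j δ u) 0 with h | h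
  · rw [h] at hRval ⊢; simpa [hc] using hRval
  · simpa [h] using hRval

/-! #### Heat semigroup facts -/

lemma gneum_cont_right (δ r : ℝ) : Continuous fun r' => Gneum δ r r' := by
  unfold Gneum
  fun_prop

/-- integrability of `r' ↦ G(r,r') ρ(r')` for fixed `r`. -/
lemma slice_integrable (hδ : 0 < δ) {ρ : ℝ → ℝ} (hInt : Integrable ρ μ0) (r : ℝ) :
    Integrable (fun r' => Gneum δ r r' * ρ r') μ0 := by
  refine hInt.bdd_mul (c := 2 * (Real.sqrt (2 * Real.pi * δ))⁻¹) ((gneum_cont_right δ r).aestronglyMeasurable) ?_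
  refine Eventually.of_forall fun r' => ?_
  rw [Real.norm_eq_abs, abs_of_nonneg (gneum_nonneg hδ r r')]
  exact gneum_le hδ r r'

lemma prod_integrable (hδ : 0 < δ) {ρ : ℝ → ℝ} (h0 : ∀ r, 0 ≤ ρ r)
    (hInt : Integrable ρ μ0) :
    Integrable (fun p : ℝ × ℝ => Gneum δ p.1 p.2 * ρ p.2)
      ((μ0 : Measure ℝ).prod μ0) := by
  have hmeas : AEStronglyMeasurable (fun p : ℝ × ℝ => Gneum δ p.1 p.2 * ρ p.2)
      ((μ0 : Measure ℝ).prod μ0) :=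
    ((gneum_continuous δ).aestronglyMeasurable).mul hInt.aestronglyMeasurable.comp_snd
  rw [integrable_prod_iff' hmeas]
  constructor
  · exact Eventually.of_forall fun r' => (gneum_integrable hδ r').mul_const (ρ r')
  · refine hInt.congr ?_
    filter_upwards [ae_restrict_mem measurableSet_Ioi] with r' _
    have : ∀ r : ℝ, ‖Gneum δ r r' * ρ r'‖ = Gneum δ r r' * ρ r' := by
      intro r
      rw [Real.norm_eq_abs, abs_of_nonneg (mul_nonneg (gneum_nonneg hδ r r') (h0 r'))]
    calc ρ r' = (∫ r in Ioi (0:ℝ), Gneum δ r r') * ρ r' := by rw [gneum_mass hδ r']; ring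
      _ = ∫ r in Ioi (0:ℝ), Gneum δ r r' * ρ r' := (integral_mul_const _ _).symm
      _ = ∫ r in Ioi (0:ℝ), ‖Gneum δ r r' * ρ r'‖ := by
          exact (setIntegral_congr_fun measurableSet_Ioi fun r _ => (this r).symm)

/-- integrability of the smoothed density `r ↦ ∫ G(r,r')ρ(r')`. -/
lemma smooth_integrable (hδ : 0 < δ) {ρ : ℝ → ℝ} (h0 : ∀ r, 0 ≤ ρ r)
    (hInt : Integrable ρ μ0) :
    Integrable (fun r => ∫ r' in Ioi (0:ℝ), Gneum δ r r' * ρ r') μ0 :=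
  (prod_integrable hδ h0 hInt).integral_prod_left

/-- mass preservation of smoothing. -/
lemma smooth_mass (hδ : 0 < δ) {ρ : ℝ → ℝ} (h0 : ∀ r, 0 ≤ ρ r)
    (hInt : Integrable ρ μ0) :
    ∫ r in Ioi (0:ℝ), (∫ r' in Ioi (0:ℝ), Gneum δ r r' * ρ r')
      = ∫ r' in Ioi (0:ℝ), ρ r' := by
  rw [integral_integral_swap (prod_integrable hδ h0 hInt)]
  refine setIntegral_congr_fun measurableSet_Ioi fun r' _ => ?_
  rw [integral_mul_const, gneum_mass hδ r', one_mul]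

/-- heat output density -/
def hdens (δ c : ℝ) (ρ : ℝ → ℝ) (r : ℝ) : ℝ :=
  c * Gneum δ r 0 + ∫ r' in Ioi (0:ℝ), Gneum δ r r' * ρ r'

lemma heat_snd (δ : ℝ) (a : UEl) : (heat δ a).2 = hdens δ a.1 a.2 := rfl

lemma heat_fst (δ : ℝ) (a : UEl) : (heat δ a).1 = 0 := rfl

lemma hdens_integrable (hδ : 0 < δ) (c : ℝ) {ρ : ℝ → ℝ} (h0 : ∀ r, 0 ≤ ρ r)
    (hInt : Integrable ρ μ0) : Integrable (hdens δ c ρ) μ0 :=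
  ((gneum_integrable hδ 0).const_mul c).add (smooth_integrable hδ h0 hInt)

lemma hdens_nonneg (hδ : 0 < δ) {c : ℝ} (hc : 0 ≤ c) {ρ : ℝ → ℝ} (h0 : ∀ r, 0 ≤ ρ r)
    (r : ℝ) : 0 ≤ hdens δ c ρ r := by
  refine add_nonneg (mul_nonneg hc (gneum_nonneg hδ r 0)) (integral_nonneg fun r' => ?_)
  exact mul_nonneg (gneum_nonneg hδ r r') (h0 r')

lemma hdens_mass (hδ : 0 < δ) (c : ℝ) {ρ : ℝ → ℝ} (h0 : ∀ r, 0 ≤ ρ r)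
    (hInt : Integrable ρ μ0) :
    ∫ r in Ioi (0:ℝ), hdens δ c ρ r = c + ∫ r' in Ioi (0:ℝ), ρ r' := by
  unfold hdens
  rw [integral_add ((gneum_integrable hδ 0).const_mul c) (smooth_integrable hδ h0 hInt),
    integral_const_mul, gneum_mass hδ 0, mul_one, smooth_mass hδ h0 hInt]

/-- L¹-contraction of the heat semigroup. -/
lemma heat_contraction (hδ : 0 < δ) {c₁ c₂ : ℝ} {ρ₁ ρ₂ : ℝ → ℝ}
    (h01 : ∀ r, 0 ≤ ρ₁ r) (h02 : ∀ r, 0 ≤ ρ₂ r)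
    (hI1 : Integrable ρ₁ μ0) (hI2 : Integrable ρ₂ μ0) :
    ∫ r in Ioi (0:ℝ), |hdens δ c₁ ρ₁ r - hdens δ c₂ ρ₂ r|
      ≤ |c₁ - c₂| + ∫ r in Ioi (0:ℝ), |ρ₁ r - ρ₂ r| := by
  set Δ : ℝ → ℝ := fun r => |ρ₁ r - ρ₂ r| with hΔdef
  have hΔ0 : ∀ r, 0 ≤ Δ r := fun r => abs_nonneg _
  have hΔInt : Integrable Δ μ0 := (hI1.sub hI2).abs
  set m : ℝ → ℝ := hdens δ |c₁ - c₂| Δ with hmdef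
  have hpt : ∀ r, |hdens δ c₁ ρ₁ r - hdens δ c₂ ρ₂ r| ≤ m r := by
    intro r
    have hsub : hdens δ c₁ ρ₁ r - hdens δ c₂ ρ₂ r
        = (c₁ - c₂) * Gneum δ r 0
          + ∫ r' in Ioi (0:ℝ), Gneum δ r r' * (ρ₁ r' - ρ₂ r') := by
      unfold hdens
      have hint := integral_sub (slice_integrable hδ hI1 r) (slice_integrable hδ hI2 r)
      simp only [mul_sub]
      rw [hint]
      ring
    rw [hsub, hmdef]
    unfold hdens
    refine le_trans (abs_add_le _ _) (add_le_add ?_ ?_)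
    · rw [abs_mul, abs_of_nonneg (gneum_nonneg hδ r 0)]
    · have habs := norm_integral_le_integral_norm
        (μ := μ0) (f := fun r' => Gneum δ r r' * (ρ₁ r' - ρ₂ r'))
      simp only [Real.norm_eq_abs] at habs
      refine le_trans habs ?_
      refine le_of_eq (setIntegral_congr_fun measurableSet_Ioi fun r' _ => ?_)
      rw [abs_mul, abs_of_nonneg (gneum_nonneg hδ r r')]
  have hIl : Integrable (fun r => |hdens δ c₁ ρ₁ r - hdens δ c₂ ρ₂ r|) μ0 :=
    ((hdens_integrable hδ c₁ h01 hI1).sub (hdens_integrable hδ c₂ h02 hI2)).abs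
  have hIm : Integrable m μ0 := hdens_integrable hδ _ hΔ0 hΔInt
  calc ∫ r in Ioi (0:ℝ), |hdens δ c₁ ρ₁ r - hdens δ c₂ ρ₂ r|
      ≤ ∫ r in Ioi (0:ℝ), m r := integral_mono hIl hIm hpt
    _ = |c₁ - c₂| + ∫ r in Ioi (0:ℝ), Δ r := hdens_mass hδ _ hΔ0 hΔInt

/-! #### Cut-and-paste facts -/

lemma cut_snd (j δ : ℝ) (u : UEl) :
    (cutPaste j δ u).2 = indicator (Icc 0 (Rdelta j δ u)) u.2 := rfl

lemma cut_fst (j δ : ℝ) (u : UEl) : (cutPaste j δ u).1 = j * δ := rfl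

lemma cut_nonneg {u : UEl} (h0 : ∀ r, 0 ≤ u.2 r) (r : ℝ) :
    0 ≤ (cutPaste j δ u).2 r :=
  indicator_nonneg (fun y _ => h0 y) r

lemma cut_integrable {u : UEl} (hInt : Integrable u.2 μ0) :
    Integrable (cutPaste j δ u).2 μ0 :=
  hInt.indicator measurableSet_Icc

/-- splitting `Ioi 0 = Ioc 0 R ∪ Ioi R` for an integral. -/
lemma split_Ioi {f : ℝ → ℝ} (hf : Integrable f μ0) {R : ℝ} (hR : 0 ≤ R) :
    ∫ x in Ioi (0:ℝ), f x = (∫ x in Ioc 0 R, f x) + ∫ x in Ioi R, f x := by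
  have h1 : IntegrableOn f (Ioi 0) := hf
  rw [← setIntegral_union (Ioc_disjoint_Ioi le_rfl) measurableSet_Ioi
    (h1.mono_set Ioc_subset_Ioi_self) (h1.mono_set (Ioi_subset_Ioi hR)),
    Ioc_union_Ioi_eq_Ioi hR]

lemma cut_mass (hjδ : 0 < j * δ) {u : UEl} (hc : u.1 = 0)
    (h0 : ∀ r, 0 ≤ u.2 r) (hInt : Integrable u.2 μ0)
    (hm : j * δ < ∫ x in Ioi (0:ℝ), u.2 x) :
    ∫ x in Ioi (0:ℝ), (cutPaste j δ u).2 x = (∫ x in Ioi (0:ℝ), u.2 x) - j * δ := by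
  obtain ⟨hR0, hRval⟩ := Rdelta_spec hjδ hc h0 hInt hm
  rw [cut_snd, setIntegral_indicator measurableSet_Icc]
  have hseteq : Ioi 0 ∩ Icc 0 (Rdelta j δ u) = Ioc 0 (Rdelta j δ u) := by
    ext x
    simp only [mem_inter_iff, mem_Ioi, mem_Icc, mem_Ioc]
    constructor
    · rintro ⟨h3, _, h2⟩; exact ⟨h3, h2⟩
    · rintro ⟨h1, h2⟩; exact ⟨h1, le_of_lt h1, h2⟩
  rw [hseteq]
  have := split_Ioi hInt hR0
  rw [hRval] at this
  linarith

lemma cut_dist (hjδ : 0 < j * δ) {u : UEl} (hc : u.1 = 0)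
    (h0 : ∀ r, 0 ≤ u.2 r) (hInt : Integrable u.2 μ0)
    (hm : j * δ < ∫ x in Ioi (0:ℝ), u.2 x) :
    ∫ x in Ioi (0:ℝ), |u.2 x - (cutPaste j δ u).2 x| = j * δ := by
  obtain ⟨hR0, hRval⟩ := Rdelta_spec hjδ hc h0 hInt hm
  have hpt : ∀ x ∈ Ioi (0:ℝ), |u.2 x - (cutPaste j δ u).2 x|
      = indicator (Ioi (Rdelta j δ u)) u.2 x := by
    intro x hx
    rw [cut_snd]
    rcases le_or_gt x (Rdelta j δ u) with h | h
    · rw [indicator_of_mem (mem_Icc.mpr ⟨le_of_lt hx, h⟩),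
        indicator_of_notMem (notMem_Ioi.mpr h)]
      simp
    · rw [indicator_of_notMem (fun hmem => absurd (mem_Icc.mp hmem).2 (not_le.mpr h)),
        indicator_of_mem (mem_Ioi.mpr h)]
      rw [sub_zero, abs_of_nonneg (h0 x)]
  rw [setIntegral_congr_fun measurableSet_Ioi hpt,
    setIntegral_indicator measurableSet_Ioi]
  have : Ioi (0:ℝ) ∩ Ioi (Rdelta j δ u) = Ioi (Rdelta j δ u) := by
    rw [Ioi_inter_Ioi, sup_eq_right.2 hR0]
  rw [this]
  exact hRval

/-- asymmetric K-contraction helper. -/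
lemma K_contr_aux (hjδ : 0 < j * δ) {u v : UEl} (hcu : u.1 = 0) (hcv : v.1 = 0)
    (h0u : ∀ r, 0 ≤ u.2 r) (h0v : ∀ r, 0 ≤ v.2 r)
    (hIu : Integrable u.2 μ0) (hIv : Integrable v.2 μ0)
    (hmu : j * δ < ∫ x in Ioi (0:ℝ), u.2 x) (hmv : j * δ < ∫ x in Ioi (0:ℝ), v.2 x)
    (hRle : Rdelta j δ u ≤ Rdelta j δ v) :
    ∫ r in Ioi (0:ℝ), |(cutPaste j δ u).2 r - (cutPaste j δ v).2 r|
      ≤ ∫ r in Ioi (0:ℝ), |u.2 r - v.2 r| := by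
  obtain ⟨hRu0, hRuval⟩ := Rdelta_spec hjδ hcu h0u hIu hmu
  obtain ⟨hRv0, hRvval⟩ := Rdelta_spec hjδ hcv h0v hIv hmv
  have hIu' : IntegrableOn u.2 (Ioi 0) := hIu
  have hIv' : IntegrableOn v.2 (Ioi 0) := hIv
  set Ru := Rdelta j δ u with hRudef
  set Rv := Rdelta j δ v with hRvdef
  set w : ℝ → ℝ := fun r => |(cutPaste j δ u).2 r - (cutPaste j δ v).2 r| with hwdef
  have hwInt : Integrable w μ0 := ((cut_integrable hIu).sub (cut_integrable hIv)).abs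
  have hΔInt : Integrable (fun r => |u.2 r - v.2 r|) μ0 := (hIu.sub hIv).abs
  -- split at Ru
  have hsplit1 : ∫ r in Ioi (0:ℝ), w r = (∫ r in Ioc 0 Ru, w r) + ∫ r in Ioi Ru, w r :=
    split_Ioi hwInt hRu0
  -- on (0, Ru] : w = |u - v|
  have heq1 : ∫ r in Ioc 0 Ru, w r = ∫ r in Ioc 0 Ru, |u.2 r - v.2 r| := by
    refine setIntegral_congr_fun measurableSet_Ioc fun r hr => ?_
    rw [hwdef]
    simp only [cut_snd]
    rw [indicator_of_mem (mem_Icc.mpr ⟨le_of_lt hr.1, hr.2⟩),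
      indicator_of_mem (mem_Icc.mpr ⟨le_of_lt hr.1, le_trans hr.2 hRle⟩)]
  -- on (Ru, ∞) : w = indicator (Icc 0 Rv) v  (since u-part vanishes)
  have heq2 : ∫ r in Ioi Ru, w r = ∫ r in Ioi Ru, indicator (Icc 0 Rv) v.2 r := by
    refine setIntegral_congr_fun measurableSet_Ioi fun r hr => ?_
    rw [hwdef]
    simp only [cut_snd]
    rw [indicator_of_notMem (fun hmem => absurd (mem_Icc.mp hmem).2 (not_le.mpr hr))]
    rw [zero_sub, abs_neg, abs_of_nonneg (indicator_nonneg (fun y _ => h0v y) r)]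
  -- bound the second piece
  have hIvRu : IntegrableOn v.2 (Ioi Ru) := hIv'.mono_set (Ioi_subset_Ioi hRu0)
  have hIuRu : IntegrableOn u.2 (Ioi Ru) := hIu'.mono_set (Ioi_subset_Ioi hRu0)
  have hbound2 : ∫ r in Ioi Ru, indicator (Icc 0 Rv) v.2 r
      ≤ ∫ r in Ioi Ru, |u.2 r - v.2 r| := by
    have hstep : ∫ r in Ioi Ru, indicator (Icc 0 Rv) v.2 r
        = (∫ r in Ioi Ru, v.2 r) - ∫ r in Ioi Rv, v.2 r := by
      rw [setIntegral_indicator measurableSet_Icc]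
      have hseteq : Ioi Ru ∩ Icc 0 Rv = Ioc Ru Rv := by
        ext x
        simp only [mem_inter_iff, mem_Ioi, mem_Icc, mem_Ioc]
        constructor
        · rintro ⟨h3, _, h2⟩; exact ⟨h3, h2⟩
        · rintro ⟨h1, h2⟩; exact ⟨h1, le_trans hRu0 (le_of_lt h1), h2⟩
      rw [hseteq]
      have hsp : ∫ x in Ioi Ru, v.2 x = (∫ x in Ioc Ru Rv, v.2 x) + ∫ x in Ioi Rv, v.2 x := by
        rw [← setIntegral_union (Ioc_disjoint_Ioi le_rfl) measurableSet_Ioi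
          (hIvRu.mono_set Ioc_subset_Ioi_self) (hIv'.mono_set (Ioi_subset_Ioi hRv0)),
          Ioc_union_Ioi_eq_Ioi hRle]
      linarith
    rw [hstep, hRvval, ← hRuval]
    have hsub : (∫ r in Ioi Ru, v.2 r) - ∫ r in Ioi Ru, u.2 r
        = ∫ r in Ioi Ru, (v.2 r - u.2 r) := (integral_sub hIvRu hIuRu).symm
    rw [hsub]
    have hΔInt' : IntegrableOn (fun r => |u.2 r - v.2 r|) (Ioi 0) := hΔInt
    refine integral_mono (hIvRu.sub hIuRu) (hΔInt'.mono_set (Ioi_subset_Ioi hRu0)) ?_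
    intro r
    show v.2 r - u.2 r ≤ |u.2 r - v.2 r|
    rw [abs_sub_comm]
    exact le_abs_self _
  -- put together
  rw [hsplit1, heq1, heq2]
  have hfinal := split_Ioi hΔInt hRu0
  have h2 := hbound2
  linarith

lemma K_contraction (hjδ : 0 < j * δ) {u v : UEl} (hcu : u.1 = 0) (hcv : v.1 = 0)
    (h0u : ∀ r, 0 ≤ u.2 r) (h0v : ∀ r, 0 ≤ v.2 r)
    (hIu : Integrable u.2 μ0) (hIv : Integrable v.2 μ0)
    (hmu : j * δ < ∫ x in Ioi (0:ℝ), u.2 x) (hmv : j * δ < ∫ x in Ioi (0:ℝ), v.2 x) :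
    ∫ r in Ioi (0:ℝ), |(cutPaste j δ u).2 r - (cutPaste j δ v).2 r|
      ≤ ∫ r in Ioi (0:ℝ), |u.2 r - v.2 r| := by
  rcases le_total (Rdelta j δ u) (Rdelta j δ v) with h | h
  · exact K_contr_aux hjδ hcu hcv h0u h0v hIu hIv hmu hmv h
  · have := K_contr_aux hjδ hcv hcu h0v h0u hIv hIu hmv hmu h
    calc ∫ r in Ioi (0:ℝ), |(cutPaste j δ u).2 r - (cutPaste j δ v).2 r|
        = ∫ r in Ioi (0:ℝ), |(cutPaste j δ v).2 r - (cutPaste j δ u).2 r| := by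
          refine setIntegral_congr_fun measurableSet_Ioi fun r _ => ?_
          exact abs_sub_comm _ _
      _ ≤ ∫ r in Ioi (0:ℝ), |v.2 r - u.2 r| := this
      _ = ∫ r in Ioi (0:ℝ), |u.2 r - v.2 r| := by
          refine setIntegral_congr_fun measurableSet_Ioi fun r _ => ?_
          exact abs_sub_comm _ _

/-! #### distance lemmas -/

lemma dist1_symm (a b : UEl) : dist1 a b = dist1 b a := by
  unfold dist1
  rw [abs_sub_comm]
  congr 1
  refine setIntegral_congr_fun measurableSet_Ioi fun r _ => abs_sub_comm _ _

lemma dist1_triangle {a b c : UEl} (hIa : Integrable a.2 μ0)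
    (hIb : Integrable b.2 μ0) (hIc : Integrable c.2 μ0) :
    dist1 a c ≤ dist1 a b + dist1 b c := by
  unfold dist1
  have h1 : |a.1 - c.1| ≤ |a.1 - b.1| + |b.1 - c.1| := abs_sub_le _ _ _
  have d1 : Integrable (fun r => |a.2 r - b.2 r|) (volume.restrict (Ioi 0)) :=
    (hIa.sub hIb).abs
  have d2 : Integrable (fun r => |b.2 r - c.2 r|) (volume.restrict (Ioi 0)) :=
    (hIb.sub hIc).abs
  have d3 : Integrable (fun r => |a.2 r - c.2 r|) (volume.restrict (Ioi 0)) :=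
    (hIa.sub hIc).abs
  have h2 : ∫ r in Ioi (0:ℝ), |a.2 r - c.2 r|
      ≤ ∫ r in Ioi (0:ℝ), (|a.2 r - b.2 r| + |b.2 r - c.2 r|) :=
    integral_mono d3 (d1.add d2) fun r => abs_sub_le _ _ _
  have h3 := integral_add d1 d2
  rw [h3] at h2
  linarith

end BC

end

/-- the upper and lower barriers are within `4jδ` of each other in
total variation. -/
theorem barriers_close (j δ : ℝ) (hj : 0 < j) (hδ : 0 < δ)
    (u : ℝ → ℝ) (hu : goodFn u)
    (hju : j * δ < ∫ x in Set.Ioi (0:ℝ), u x) :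
    ∀ k : ℕ,
      dist1 (Splus j δ ((0:ℝ), u) k) (Sminus j δ ((0:ℝ), u) k) ≤ 4 * j * δ := by
  classical
  open MeasureTheory Set Filter BC in
  obtain ⟨h0u, hIu, -⟩ := hu
  have hjδ : 0 < j * δ := mul_pos hj hδ
  set u₀ : UEl := ((0:ℝ), u) with hu₀
  set M : ℝ := ∫ x in Set.Ioi (0:ℝ), u x with hM
  -- the full induction invariant
  suffices H : ∀ k : ℕ,
      (∀ r, 0 ≤ (Sminus j δ u₀ k).2 r) ∧
      Integrable (Sminus j δ u₀ k).2 (volume.restrict (Set.Ioi (0:ℝ))) ∧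
      0 ≤ (Sminus j δ u₀ k).1 ∧
      (Sminus j δ u₀ k).1 + (∫ x in Set.Ioi (0:ℝ), (Sminus j δ u₀ k).2 x) = M ∧
      (∀ r, 0 ≤ (Splus j δ u₀ k).2 r) ∧
      Integrable (Splus j δ u₀ k).2 (volume.restrict (Set.Ioi (0:ℝ))) ∧
      (Splus j δ u₀ k).1 = 0 ∧
      (Splus j δ u₀ k).1 + (∫ x in Set.Ioi (0:ℝ), (Splus j δ u₀ k).2 x) = M ∧
      dist1 (Sminus j δ u₀ k) (cutPaste j δ (Splus j δ u₀ k)) ≤ 2 * (j * δ) ∧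
      dist1 (Splus j δ u₀ k) (Sminus j δ u₀ k) ≤ 4 * j * δ by
    intro k
    exact (H k).2.2.2.2.2.2.2.2.2
  intro k
  induction k with
  | zero =>
    have hc0 : (u₀ : UEl).1 = 0 := rfl
    have hmass0 : j * δ < ∫ x in Set.Ioi (0:ℝ), (u₀ : UEl).2 x := hju
    have hcd := cut_dist hjδ (u := u₀) hc0 h0u hIu hmass0
    refine ⟨h0u, hIu, le_refl 0, ?_, h0u, hIu, rfl, ?_, ?_, ?_⟩
    · show (0:ℝ) + (∫ x in Set.Ioi (0:ℝ), u x) = M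
      rw [zero_add]
    · show (0:ℝ) + (∫ x in Set.Ioi (0:ℝ), u x) = M
      rw [zero_add]
    · show dist1 u₀ (cutPaste j δ u₀) ≤ 2 * (j * δ)
      rw [dist1, cut_fst, hc0, zero_sub, abs_neg, abs_of_pos hjδ]
      rw [hcd]
      linarith
    · show dist1 u₀ u₀ ≤ 4 * j * δ
      have : dist1 u₀ u₀ = 0 := by simp [dist1]
      rw [this]
      nlinarith
  | succ k ih =>
    obtain ⟨hA0, hAI, hAc, hAm, hB0, hBI, hBc, hBm, hvw, -⟩ := ih
    set A : UEl := Sminus j δ u₀ k with hAdef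
    set B : UEl := Splus j δ u₀ k with hBdef
    -- mass of B's density is M
    have hBmass : ∫ x in Set.Ioi (0:ℝ), B.2 x = M := by rw [hBc] at hBm; linarith
    have hmB : j * δ < ∫ x in Set.Ioi (0:ℝ), B.2 x := by rw [hBmass]; exact hju
    -- W = cutPaste B
    set W : UEl := cutPaste j δ B with hWdef
    have hW0 : ∀ r, 0 ≤ W.2 r := cut_nonneg hB0
    have hWI : Integrable W.2 (volume.restrict (Set.Ioi (0:ℝ))) := cut_integrable hBI
    have hWc : W.1 = j * δ := cut_fst j δ B
    have hWm : ∫ x in Set.Ioi (0:ℝ), W.2 x = M - j * δ := by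
      rw [hWdef]
      rw [cut_mass hjδ hBc hB0 hBI hmB, hBmass]
    -- heat outputs
    have hvc : (heat δ A).1 = 0 := rfl
    have hwc : (heat δ W).1 = 0 := rfl
    have hv0 : ∀ r, 0 ≤ (heat δ A).2 r := by
      rw [heat_snd]; exact hdens_nonneg hδ hAc hA0
    have hw0 : ∀ r, 0 ≤ (heat δ W).2 r := by
      rw [heat_snd, hWc]; exact hdens_nonneg hδ hjδ.le hW0
    have hvI : Integrable (heat δ A).2 (volume.restrict (Set.Ioi (0:ℝ))) := by
      rw [heat_snd]; exact hdens_integrable hδ A.1 hA0 hAI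
    have hwI : Integrable (heat δ W).2 (volume.restrict (Set.Ioi (0:ℝ))) := by
      rw [heat_snd]; exact hdens_integrable hδ W.1 hW0 hWI
    have hvm : ∫ x in Set.Ioi (0:ℝ), (heat δ A).2 x = M := by
      rw [heat_snd, hdens_mass hδ A.1 hA0 hAI]; exact hAm
    have hwm : ∫ x in Set.Ioi (0:ℝ), (heat δ W).2 x = M := by
      rw [heat_snd, hdens_mass hδ W.1 hW0 hWI, hWc, hWm]; ring
    have hvbig : j * δ < ∫ x in Set.Ioi (0:ℝ), (heat δ A).2 x := by rw [hvm]; exact hju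
    have hwbig : j * δ < ∫ x in Set.Ioi (0:ℝ), (heat δ W).2 x := by rw [hwm]; exact hju
    -- identify the successors
    have hA' : Sminus j δ u₀ (k+1) = cutPaste j δ (heat δ A) := rfl
    have hB' : Splus j δ u₀ (k+1) = heat δ W := rfl
    rw [hA', hB']
    -- cut of heat δ A
    have hcutdistA := cut_dist hjδ hvc hv0 hvI hvbig
    have hcutmassA := cut_mass hjδ hvc hv0 hvI hvbig
    have hcutdistW := cut_dist hjδ hwc hw0 hwI hwbig
    have hcutmassW := cut_mass hjδ hwc hw0 hwI hwbig
    -- heat contraction between A and W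
    have hheat : ∫ r in Set.Ioi (0:ℝ), |(heat δ A).2 r - (heat δ W).2 r|
        ≤ |A.1 - W.1| + ∫ r in Set.Ioi (0:ℝ), |A.2 r - W.2 r| := by
      rw [heat_snd, heat_snd]
      exact heat_contraction hδ hA0 hW0 hAI hWI
    have hvwval : |A.1 - W.1| + (∫ r in Set.Ioi (0:ℝ), |A.2 r - W.2 r|) ≤ 2 * (j * δ) := hvw
    -- K contraction between heat δ A and heat δ W
    have hK := K_contraction hjδ hvc hwc hv0 hw0 hvI hwI hvbig hwbig
    -- the new v-w distance
    have hnewvw : dist1 (cutPaste j δ (heat δ A)) (cutPaste j δ (heat δ W)) ≤ 2 * (j * δ) := by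
      rw [dist1, cut_fst, cut_fst, sub_self, abs_zero, zero_add]
      calc ∫ r in Set.Ioi (0:ℝ), |(cutPaste j δ (heat δ A)).2 r - (cutPaste j δ (heat δ W)).2 r|
          ≤ ∫ r in Set.Ioi (0:ℝ), |(heat δ A).2 r - (heat δ W).2 r| := hK
        _ ≤ |A.1 - W.1| + ∫ r in Set.Ioi (0:ℝ), |A.2 r - W.2 r| := hheat
        _ ≤ 2 * (j * δ) := hvwval
    -- assemble all components
    refine ⟨cut_nonneg hv0, cut_integrable hvI, by rw [cut_fst]; exact hjδ.le, ?_,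
      hw0, hwI, hwc, ?_, hnewvw, ?_⟩
    · -- mass of A'
      rw [cut_fst, hcutmassA, hvm]
      ring
    · -- mass of B'
      rw [hwc, hwm]
      ring
    · -- the main distance bound
      have htri := dist1_triangle (a := heat δ W) (b := heat δ A)
        (c := cutPaste j δ (heat δ A)) hwI hvI (cut_integrable hvI)
      have hd1 : dist1 (heat δ W) (heat δ A) ≤ 2 * (j * δ) := by
        rw [dist1, hvc, hwc, sub_self, abs_zero, zero_add]
        calc ∫ r in Set.Ioi (0:ℝ), |(heat δ W).2 r - (heat δ A).2 r|
            = ∫ r in Set.Ioi (0:ℝ), |(heat δ A).2 r - (heat δ W).2 r| := by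
              refine setIntegral_congr_fun measurableSet_Ioi fun r _ => abs_sub_comm _ _
          _ ≤ |A.1 - W.1| + ∫ r in Set.Ioi (0:ℝ), |A.2 r - W.2 r| := hheat
          _ ≤ 2 * (j * δ) := hvwval
      have hd2 : dist1 (heat δ A) (cutPaste j δ (heat δ A)) ≤ 2 * (j * δ) := by
        rw [dist1, cut_fst, hvc, zero_sub, abs_neg, abs_of_pos hjδ, hcutdistA]
        linarith
      calc dist1 (heat δ W) (cutPaste j δ (heat δ A))
          ≤ dist1 (heat δ W) (heat δ A) + dist1 (heat δ A) (cutPaste j δ (heat δ A)) := htri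
        _ ≤ 2 * (j * δ) + 2 * (j * δ) := add_le_add hd1 hd2
        _ = 4 * j * δ := by ring
end
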